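/- Let H and K be self-adjoint operators on n qubits with local quantum norm at most M, and let ω_H = e^{−H}/Tr e^{−H} and ω_K = e^{−K}/Tr e^{−K} be the associated Gibbs states. Assume that both ω_H and ω_K satisfy the transportation-cost inequality ‖ρ − ω‖²_{W₁} ≤ (nC/2) S(ρ‖ω) for every n-qubit state ρ, with the same constant C > 0. Then ‖ω_H − ω_K‖²_{W₁loc} / n² ≤ ‖ω_H − ω_K‖²_{W₁} / n² ≤ (MC/2) · ‖ω_H − ω_K‖_{W₁loc} / n. -/

import Mathlib

open Matrix BigOperators
open scoped ComplexOrder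

noncomputable section

namespace QW1

variable {ι : Type*} [Fintype ι] [DecidableEq ι]

/-- The space of (not necessarily Hermitian) operators on a system of qubits labelled by `ι`:
matrices indexed by the computational basis `ι → Fin 2`. -/
abbrev QMat (ι : Type*) [Fintype ι] [DecidableEq ι] :=
  Matrix (ι → Fin 2) (ι → Fin 2) ℂ

/-- The operator norm (largest singular value) of a matrix. -/
noncomputable def opNorm {d : Type*} [Fintype d] [DecidableEq d] (A : Matrix d d ℂ) : ℝ :=
  ⨆ i, Real.sqrt ((Matrix.isHermitian_conjTranspose_mul_self A).eigenvalues i)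

/-- The trace norm (sum of singular values) of a matrix. -/
noncomputable def traceNorm {d : Type*} [Fintype d] [DecidableEq d] (A : Matrix d d ℂ) : ℝ :=
  ∑ i, Real.sqrt ((Matrix.isHermitian_conjTranspose_mul_self A).eigenvalues i)

/-- Combine an assignment of basis states on `Λ` and on its complement into one on all of `ι`. -/
def merge (Λ : Finset ι) (f : {x // x ∈ Λ} → Fin 2) (g : {x // x ∉ Λ} → Fin 2) (x : ι) :
    Fin 2 :=
  if h : x ∈ Λ then f ⟨x, h⟩ else g ⟨x, h⟩

/-- The partial trace over the qubits outside `Λ`, `Tr_{Λᶜ}`, yielding an operator on the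
qubits in `Λ`. -/
noncomputable def ptrace (Λ : Finset ι) (A : QMat ι) :
    Matrix ({x // x ∈ Λ} → Fin 2) ({x // x ∈ Λ} → Fin 2) ℂ :=
  fun f g => ∑ h : {x : ι // x ∉ Λ} → Fin 2, A (merge Λ f h) (merge Λ g h)

/-- The extension `M ⊗ I_{Λᶜ}` of an operator `M` on the qubits in `Λ` to all the qubits. -/
def embed (Λ : Finset ι)
    (M : Matrix ({x // x ∈ Λ} → Fin 2) ({x // x ∈ Λ} → Fin 2) ℂ) : QMat ι :=
  fun f g =>
    (if ∀ x : ι, x ∉ Λ → f x = g x then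
      M (fun x => f x.1) (fun x => g x.1) else 0)

/-- `H` acts on (at most) the qubits in `Λ`: it has the form `H_Λ ⊗ I_{Λᶜ}` with `H_Λ`
self-adjoint. -/
def ActsOn (Λ : Finset ι) (H : QMat ι) : Prop :=
  ∃ M, M.IsHermitian ∧ H = embed Λ M

/-- The local quantum norm with penalty coefficients `c`. -/
noncomputable def localNorm (c : ℕ → ℝ) (H : QMat ι) : ℝ :=
  sInf { r : ℝ | ∃ F : Finset ι → QMat ι, (∀ Λ, ActsOn Λ (F Λ)) ∧ H = ∑ Λ, F Λ ∧
    r = 2 * ⨆ x : ι, ∑ Λ ∈ Finset.univ.filter (fun Λ : Finset ι => x ∈ Λ),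
      c Λ.card * opNorm (F Λ) }

/-- The local quantum `W₁` norm: the dual of the local quantum norm. -/
noncomputable def W1loc (c : ℕ → ℝ) (Δ : QMat ι) : ℝ :=
  sSup { r : ℝ | ∃ H : QMat ι, H.IsHermitian ∧ localNorm c H ≤ 1 ∧ r = ((Δ * H).trace).re }

/-- The quantum `W₁` norm of De Palma et al. -/
noncomputable def W1 (Δ : QMat ι) : ℝ :=
  sInf { r : ℝ | ∃ D : ι → QMat ι,
    (∀ x, (D x).IsHermitian ∧ (D x).trace = 0 ∧ ptrace ({x}ᶜ : Finset ι) (D x) = 0) ∧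
    Δ = ∑ x, D x ∧ r = (1 / 2) * ∑ x, traceNorm (D x) }

/-- Tensor product of operators on two disjoint families of qubits. -/
def tensor {κ : Type*} [Fintype κ] [DecidableEq κ] (A : QMat ι) (B : QMat κ) :
    QMat (ι ⊕ κ) :=
  fun f g => A (f ∘ Sum.inl) (g ∘ Sum.inl) * B (f ∘ Sum.inr) (g ∘ Sum.inr)

/-- Tensor product of single-qubit operators, one for each qubit. -/
def tensorAll (B : ι → Matrix (Fin 2) (Fin 2) ℂ) : QMat ι :=
  fun f g => ∏ j, B j (f j) (g j)

/-- The four Pauli matrices `I, X, Y, Z`. -/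
noncomputable def pauli : Fin 4 → Matrix (Fin 2) (Fin 2) ℂ :=
  ![1, !![0, 1; 1, 0], !![0, -Complex.I; Complex.I, 0], !![1, 0; 0, -1]]

/-- The Pauli operator `σ_{a 1} ⊗ ⋯ ⊗ σ_{a n}`. -/
noncomputable def pauliOp (a : ι → Fin 4) : QMat ι :=
  tensorAll fun j => pauli (a j)

/-- The weight (locality) of a Pauli operator: the number of non-identity factors. -/
def weight (a : ι → Fin 4) : ℕ :=
  (Finset.univ.filter fun j => a j ≠ 0).card

/-- A quantum state: a positive semidefinite matrix of unit trace. (`PosSemidef` is taken with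
respect to the complex order.) -/
def IsState (ρ : QMat ι) : Prop :=
  ρ.PosSemidef ∧ ρ.trace = 1

end QW1

namespace QW1

variable {ι : Type*} [Fintype ι] [DecidableEq ι]

/-- The dependence `∂_x H` of the observable `H` on the qubit `x`. -/
noncomputable def dep (x : ι) (H : QMat ι) : ℝ :=
  2 * sInf { r : ℝ | ∃ K : QMat ι, ActsOn ({x}ᶜ : Finset ι) K ∧ r = opNorm (H - K) }

/-- The quantum Lipschitz constant `‖H‖_L = max_x ∂_x H`. -/
noncomputable def lipNorm (H : QMat ι) : ℝ :=
  ⨆ x : ι, dep x H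

/-- Single-qubit unitaries rotating the eigenbases of the Paulis `Z`, `X`, `Y`
to the computational basis. -/
noncomputable def ubasis : Fin 3 → Matrix (Fin 2) (Fin 2) ℂ :=
  ![1,
    (Real.sqrt 2 : ℂ)⁻¹ • !![1, 1; 1, -1],
    (Real.sqrt 2 : ℂ)⁻¹ • !![1, -Complex.I; 1, Complex.I]]

/-- The single-qubit classical shadow `3 U† |b⟩⟨b| U − I`. -/
noncomputable def shadow1 (w : Fin 3) (b : Fin 2) : Matrix (Fin 2) (Fin 2) ℂ :=
  (3 : ℂ) • ((ubasis w)ᴴ * Matrix.single b b 1 * ubasis w) - 1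

/-- The classical shadow `⊗_j (3 U_j† |b_j⟩⟨b_j| U_j − I)` of the Pauli measurement
primitive associated with the sampled basis choices and outcomes `s`. -/
noncomputable def shadowOf (s : ι → Fin 3 × Fin 2) : QMat ι :=
  tensorAll fun j => shadow1 (s j).1 (s j).2

/-- The probability of the sample `s` (a uniformly random Pauli basis measured on each qubit,
with outcomes distributed with the Born probability `⟨b|UρU†|b⟩`) when measuring one copy
of `ρ` in the Pauli measurement primitive. -/
noncomputable def shadowPMF (ρ : QMat ι) (s : ι → Fin 3 × Fin 2) : ℝ :=
  ((3 : ℝ) ^ Fintype.card ι)⁻¹ *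
    (((tensorAll fun j => ubasis (s j).1) * ρ * (tensorAll fun j => ubasis (s j).1)ᴴ)
      (fun j => (s j).2) (fun j => (s j).2)).re

open Classical in
/-- The probability that `N` independent classical shadows of `ρ` (from the Pauli
measurement primitive) satisfy the event `E`. -/
noncomputable def shadowProb (ρ : QMat ι) (N : ℕ)
    (E : (Fin N → ι → Fin 3 × Fin 2) → Prop) : ℝ :=
  ∑ ω : Fin N → ι → Fin 3 × Fin 2, if E ω then ∏ i, shadowPMF ρ (ω i) else 0

/-- Extension of a single-qubit operator `K` on the qubit `i`, acting as the identity on the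
remaining qubits. -/
noncomputable def oneSite (i : ι) (K : Matrix (Fin 2) (Fin 2) ℂ) : QMat ι :=
  tensorAll fun j => if j = i then K else 1

/-- Logarithm of a Hermitian matrix via its spectral decomposition (junk value otherwise). -/
noncomputable def mlog {d : Type*} [Fintype d] [DecidableEq d] (A : Matrix d d ℂ) :
    Matrix d d ℂ :=
  if hA : A.IsHermitian then
    (hA.eigenvectorUnitary : Matrix d d ℂ) *
      Matrix.diagonal (fun i => (Real.log (hA.eigenvalues i) : ℂ)) *
      star (hA.eigenvectorUnitary : Matrix d d ℂ)
  else 0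

/-- The quantum relative entropy `S(ρ‖σ) = Tr[ρ(ln ρ − ln σ)]`. -/
noncomputable def relEnt (ρ σ : QMat ι) : ℝ :=
  ((ρ * (mlog ρ - mlog σ)).trace).re

/-- The Gibbs state `e^{−H} / Tr e^{−H}`. -/
noncomputable def gibbs (H : QMat ι) : QMat ι :=
  ((NormedSpace.exp (-H)).trace)⁻¹ • NormedSpace.exp (-H)

end QW1

open QW1 Matrix Complex


namespace QW1

set_option linter.unusedSectionVars false
set_option maxHeartbeats 1000000

section Toolkit

variable {d : Type*} [Fintype d] [DecidableEq d]

/-- squared euclidean norm of a vector -/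
def nsq (v : d → ℂ) : ℝ := ∑ i, Complex.normSq (v i)

lemma nsq_nonneg (v : d → ℂ) : 0 ≤ nsq v :=
  Finset.sum_nonneg fun _ _ => Complex.normSq_nonneg _

lemma dot_self_eq_nsq (v : d → ℂ) : star v ⬝ᵥ v = (nsq v : ℂ) := by
  simp only [dotProduct, nsq, Pi.star_apply, Complex.ofReal_sum]
  refine Finset.sum_congr rfl fun i _ => ?_
  rw [RCLike.star_def, mul_comm, Complex.mul_conj]

def enorm (v : d → ℂ) : ℝ := Real.sqrt (nsq v)

lemma enorm_nonneg (v : d → ℂ) : 0 ≤ enorm v := Real.sqrt_nonneg _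

lemma enorm_eq_norm (v : d → ℂ) : enorm v = ‖(WithLp.equiv 2 (d → ℂ)).symm v‖ := by
  rw [EuclideanSpace.norm_eq, enorm, nsq]
  congr 1
  refine Finset.sum_congr rfl fun i _ => ?_
  rw [Complex.normSq_eq_norm_sq]; rfl

lemma enorm_sq (v : d → ℂ) : enorm v ^ 2 = nsq v := Real.sq_sqrt (nsq_nonneg v)

lemma enorm_add_le (u v : d → ℂ) : enorm (u + v) ≤ enorm u + enorm v := by
  simp only [enorm_eq_norm]
  exact norm_add_le _ _

lemma enorm_smul (c : ℂ) (v : d → ℂ) : enorm (c • v) = ‖c‖ * enorm v := by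
  simp only [enorm_eq_norm]
  rw [← norm_smul]
  rfl

@[simp] lemma rcOfReal (x : ℝ) : (RCLike.ofReal x : ℂ) = (x : ℂ) := rfl

lemma cauchy (u v : d → ℂ) : ‖star u ⬝ᵥ v‖ ≤ enorm u * enorm v := by
  rw [show star u ⬝ᵥ v = inner ℂ ((WithLp.equiv 2 (d → ℂ)).symm u) ((WithLp.equiv 2 (d → ℂ)).symm v)
      from dotProduct_comm _ _, enorm_eq_norm, enorm_eq_norm]
  exact norm_inner_le_norm _ _

section spectral

variable {P : Matrix d d ℂ} (hP : P.IsHermitian)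

lemma star_mul_self_unitary : (star (hP.eigenvectorUnitary : Matrix d d ℂ)) *
    (hP.eigenvectorUnitary : Matrix d d ℂ) = 1 :=
  Matrix.mem_unitaryGroup_iff'.mp (hP.eigenvectorUnitary).2

lemma mul_star_self_unitary : (hP.eigenvectorUnitary : Matrix d d ℂ) *
    (star (hP.eigenvectorUnitary : Matrix d d ℂ)) = 1 :=
  Matrix.mem_unitaryGroup_iff.mp (hP.eigenvectorUnitary).2

/-- quadratic form in terms of eigen-coordinates -/
lemma quad_eq (v : d → ℂ) :
    star v ⬝ᵥ (P *ᵥ v) =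
      ∑ i, (hP.eigenvalues i : ℂ) *
        Complex.normSq ((star (hP.eigenvectorUnitary : Matrix d d ℂ) *ᵥ v) i) := by
  set U : Matrix d d ℂ := (hP.eigenvectorUnitary : Matrix d d ℂ) with hU
  set w := star U *ᵥ v with hw
  have hPv : P *ᵥ v = U *ᵥ (Matrix.diagonal (RCLike.ofReal ∘ hP.eigenvalues) *ᵥ w) := by
    conv_lhs => rw [hP.spectral_theorem, Unitary.conjStarAlgAut_apply]
    rw [hw, ← Matrix.mulVec_mulVec, ← Matrix.mulVec_mulVec]
  rw [hPv]
  have hdot : star v ⬝ᵥ (U *ᵥ (Matrix.diagonal (RCLike.ofReal ∘ hP.eigenvalues) *ᵥ w))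
      = star w ⬝ᵥ (Matrix.diagonal (RCLike.ofReal ∘ hP.eigenvalues) *ᵥ w) := by
    rw [Matrix.dotProduct_mulVec (star v) U]
    congr 1
    rw [hw, Matrix.star_mulVec, Matrix.star_eq_conjTranspose, Matrix.conjTranspose_conjTranspose]
  rw [hdot, dotProduct]
  refine Finset.sum_congr rfl fun i _ => ?_
  rw [Matrix.mulVec_diagonal]
  simp only [Pi.star_apply, RCLike.star_def, Function.comp_apply, Complex.normSq_eq_conj_mul_self,
    rcOfReal]
  ring

lemma nsq_starU_mulVec (v : d → ℂ) :
    nsq (star (hP.eigenvectorUnitary : Matrix d d ℂ) *ᵥ v) = nsq v := by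
  have h1 : ((nsq (star (hP.eigenvectorUnitary : Matrix d d ℂ) *ᵥ v) : ℂ)) = (nsq v : ℂ) := by
    rw [← dot_self_eq_nsq, ← dot_self_eq_nsq]
    set U : Matrix d d ℂ := (hP.eigenvectorUnitary : Matrix d d ℂ) with hU
    rw [Matrix.star_mulVec, Matrix.star_eq_conjTranspose, Matrix.conjTranspose_conjTranspose,
      Matrix.dotProduct_mulVec, Matrix.vecMul_vecMul,
      ← Matrix.star_eq_conjTranspose, mul_star_self_unitary hP, Matrix.vecMul_one]
  exact_mod_cast h1
end spectral


variable [Nonempty d]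

lemma opNorm_nonneg (A : Matrix d d ℂ) : 0 ≤ opNorm A :=
  Real.iSup_nonneg fun _ => Real.sqrt_nonneg _

lemma bddAbove_sqrt_eig (A : Matrix d d ℂ) :
    BddAbove (Set.range fun i =>
      Real.sqrt ((Matrix.isHermitian_conjTranspose_mul_self A).eigenvalues i)) :=
  (Set.finite_range _).bddAbove

lemma sqrt_eig_le_opNorm (A : Matrix d d ℂ) (i : d) :
    Real.sqrt ((Matrix.isHermitian_conjTranspose_mul_self A).eigenvalues i) ≤ opNorm A :=
  le_ciSup (bddAbove_sqrt_eig A) i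

lemma nsq_mulVec_eq (A : Matrix d d ℂ) (v : d → ℂ) :
    (nsq (A *ᵥ v) : ℂ) = star v ⬝ᵥ ((Aᴴ * A) *ᵥ v) := by
  rw [← dot_self_eq_nsq, Matrix.star_mulVec, ← Matrix.mulVec_mulVec,
    ← Matrix.dotProduct_mulVec]

lemma nsq_mulVec_le (A : Matrix d d ℂ) (v : d → ℂ) :
    nsq (A *ᵥ v) ≤ opNorm A ^ 2 * nsq v := by
  have hP := Matrix.isHermitian_conjTranspose_mul_self A
  have h1 : (nsq (A *ᵥ v) : ℂ) = ∑ i, (hP.eigenvalues i : ℂ) *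
      Complex.normSq ((star (hP.eigenvectorUnitary : Matrix d d ℂ) *ᵥ v) i) := by
    rw [nsq_mulVec_eq, quad_eq hP v]
  have h2 : nsq (A *ᵥ v) = ∑ i, hP.eigenvalues i *
      Complex.normSq ((star (hP.eigenvectorUnitary : Matrix d d ℂ) *ᵥ v) i) := by
    have := congrArg Complex.re h1
    simpa using this
  rw [h2]
  calc ∑ i, hP.eigenvalues i *
      Complex.normSq ((star (hP.eigenvectorUnitary : Matrix d d ℂ) *ᵥ v) i)
      ≤ ∑ i, opNorm A ^ 2 *
        Complex.normSq ((star (hP.eigenvectorUnitary : Matrix d d ℂ) *ᵥ v) i) := by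
        refine Finset.sum_le_sum fun i _ => ?_
        refine mul_le_mul_of_nonneg_right ?_ (Complex.normSq_nonneg _)
        have he : 0 ≤ hP.eigenvalues i :=
          (Matrix.posSemidef_conjTranspose_mul_self A).eigenvalues_nonneg i
        calc hP.eigenvalues i = Real.sqrt (hP.eigenvalues i) ^ 2 := (Real.sq_sqrt he).symm
        _ ≤ opNorm A ^ 2 := by
            have := sqrt_eig_le_opNorm A i
            exact pow_le_pow_left₀ (Real.sqrt_nonneg _) this 2
    _ = opNorm A ^ 2 * nsq v := by
        rw [← Finset.mul_sum, ← nsq, nsq_starU_mulVec hP]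

lemma enorm_mulVec_le (A : Matrix d d ℂ) (v : d → ℂ) :
    enorm (A *ᵥ v) ≤ opNorm A * enorm v := by
  rw [enorm, enorm]
  calc Real.sqrt (nsq (A *ᵥ v)) ≤ Real.sqrt (opNorm A ^ 2 * nsq v) :=
        Real.sqrt_le_sqrt (nsq_mulVec_le A v)
  _ = opNorm A * Real.sqrt (nsq v) := by
      rw [Real.sqrt_mul (sq_nonneg _), Real.sqrt_sq (opNorm_nonneg A)]

/-- eigenvector data for `AᴴA` : unit vector with `nsq (A *ᵥ v) = eig i`. -/
lemma exists_singular_vec (A : Matrix d d ℂ) (i : d) :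
    ∃ v : d → ℂ, nsq v = 1 ∧
      nsq (A *ᵥ v) = (Matrix.isHermitian_conjTranspose_mul_self A).eigenvalues i := by
  have hP := Matrix.isHermitian_conjTranspose_mul_self A
  refine ⟨⇑(hP.eigenvectorBasis i), ?_, ?_⟩
  · have hnorm : ‖hP.eigenvectorBasis i‖ = 1 := hP.eigenvectorBasis.orthonormal.1 i
    have : enorm ⇑(hP.eigenvectorBasis i) = 1 := by
      rw [enorm_eq_norm]
      exact hnorm
    have h0 := congrArg (· ^ 2) this
    simpa [enorm_sq] using h0
  · have hmv : (Aᴴ * A) *ᵥ ⇑(hP.eigenvectorBasis i)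
        = hP.eigenvalues i • ⇑(hP.eigenvectorBasis i) :=
      hP.mulVec_eigenvectorBasis i
    have h1 : (nsq (A *ᵥ ⇑(hP.eigenvectorBasis i)) : ℂ)
        = (hP.eigenvalues i : ℂ) * (nsq ⇑(hP.eigenvectorBasis i) : ℂ) := by
      rw [nsq_mulVec_eq, hmv, dotProduct_smul, dot_self_eq_nsq, Complex.real_smul]
    have hn1 : nsq ⇑(hP.eigenvectorBasis i) = 1 := by
      have hnorm : ‖hP.eigenvectorBasis i‖ = 1 := hP.eigenvectorBasis.orthonormal.1 i
      have : enorm ⇑(hP.eigenvectorBasis i) = 1 := by rw [enorm_eq_norm]; exact hnorm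
      have h0 := congrArg (· ^ 2) this
      simpa [enorm_sq] using h0
    rw [hn1] at h1
    exact_mod_cast by simpa using h1

lemma opNorm_le_of_bound (A : Matrix d d ℂ) {c : ℝ} (hc : 0 ≤ c)
    (h : ∀ v, enorm (A *ᵥ v) ≤ c * enorm v) : opNorm A ≤ c := by
  refine ciSup_le fun i => ?_
  obtain ⟨v, hv1, hv2⟩ := exists_singular_vec A i
  have := h v
  rw [enorm, enorm, hv1, hv2, Real.sqrt_one, mul_one] at this
  exact this

lemma opNorm_add_le (A B : Matrix d d ℂ) : opNorm (A + B) ≤ opNorm A + opNorm B := by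
  refine opNorm_le_of_bound _ (add_nonneg (opNorm_nonneg A) (opNorm_nonneg B)) fun v => ?_
  rw [Matrix.add_mulVec]
  calc enorm (A *ᵥ v + B *ᵥ v) ≤ enorm (A *ᵥ v) + enorm (B *ᵥ v) := enorm_add_le _ _
  _ ≤ opNorm A * enorm v + opNorm B * enorm v :=
      add_le_add (enorm_mulVec_le A v) (enorm_mulVec_le B v)
  _ = (opNorm A + opNorm B) * enorm v := by ring

lemma opNorm_smul_le (c : ℂ) (A : Matrix d d ℂ) : opNorm (c • A) ≤ ‖c‖ * opNorm A := by
  refine opNorm_le_of_bound _ (mul_nonneg (norm_nonneg c) (opNorm_nonneg A)) fun v => ?_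
  rw [Matrix.smul_mulVec, enorm_smul, mul_assoc]
  exact mul_le_mul_of_nonneg_left (enorm_mulVec_le A v) (norm_nonneg c)

lemma enorm_zero : enorm (0 : d → ℂ) = 0 := by
  simp [enorm, nsq]

lemma opNorm_zero : opNorm (0 : Matrix d d ℂ) = 0 := by
  refine le_antisymm ?_ (opNorm_nonneg 0)
  refine opNorm_le_of_bound _ le_rfl fun v => ?_
  rw [Matrix.zero_mulVec, enorm_zero, zero_mul]

lemma traceNorm_nonneg (A : Matrix d d ℂ) : 0 ≤ traceNorm A :=
  Finset.sum_nonneg fun _ _ => Real.sqrt_nonneg _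

lemma eig_congr {A B : Matrix d d ℂ} (h : A = B) (hA : A.IsHermitian) (hB : B.IsHermitian) :
    hA.eigenvalues = hB.eigenvalues := by subst h; rfl

lemma traceNorm_neg (A : Matrix d d ℂ) : traceNorm (-A) = traceNorm A := by
  unfold traceNorm
  refine Finset.sum_congr rfl fun i _ => ?_
  congr 1
  have h : (-A)ᴴ * (-A) = Aᴴ * A := by
    rw [Matrix.conjTranspose_neg, neg_mul, mul_neg, neg_neg]
  exact congrFun (eig_congr h _ _) i

lemma trace_eq_sum_dot (M : Matrix d d ℂ) {V : Matrix d d ℂ} (hV : V * star V = 1) :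
    Matrix.trace M = ∑ i, star (fun k => V k i) ⬝ᵥ (M *ᵥ fun k => V k i) := by
  have h1 : Matrix.trace M = Matrix.trace (star V * M * V) := by
    rw [Matrix.trace_mul_cycle, hV, Matrix.one_mul]
  rw [h1]
  unfold Matrix.trace
  refine Finset.sum_congr rfl fun i _ => ?_
  simp only [Matrix.diag_apply, Matrix.mul_apply, dotProduct, Matrix.mulVec, Pi.star_apply,
    Matrix.star_apply, Finset.sum_mul, Finset.mul_sum]
  rw [Finset.sum_comm]
  refine Finset.sum_congr rfl fun j _ => Finset.sum_congr rfl fun k _ => ?_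
  ring

lemma holder (A B : Matrix d d ℂ) : ‖(A * B).trace‖ ≤ traceNorm A * opNorm B := by
  have hP := Matrix.isHermitian_conjTranspose_mul_self A
  have hU : (hP.eigenvectorUnitary : Matrix d d ℂ) *
      star (hP.eigenvectorUnitary : Matrix d d ℂ) = 1 := mul_star_self_unitary hP
  rw [Matrix.trace_mul_comm, trace_eq_sum_dot (B * A) hU]
  calc ‖∑ i, star (fun k => (hP.eigenvectorUnitary : Matrix d d ℂ) k i) ⬝ᵥ
        ((B * A) *ᵥ fun k => (hP.eigenvectorUnitary : Matrix d d ℂ) k i)‖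
      ≤ ∑ i, ‖star (fun k => (hP.eigenvectorUnitary : Matrix d d ℂ) k i) ⬝ᵥ
        ((B * A) *ᵥ fun k => (hP.eigenvectorUnitary : Matrix d d ℂ) k i)‖ :=
        norm_sum_le _ _
  _ ≤ ∑ i, Real.sqrt (hP.eigenvalues i) * opNorm B := by
      refine Finset.sum_le_sum fun i _ => ?_
      set v : d → ℂ := fun k => (hP.eigenvectorUnitary : Matrix d d ℂ) k i with hv
      have hvb : v = ⇑(hP.eigenvectorBasis i) := by
        funext k
        exact hP.eigenvectorUnitary_apply k i
      have hnv : nsq v = 1 := by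
        rw [hvb]
        have hnorm : ‖hP.eigenvectorBasis i‖ = 1 := hP.eigenvectorBasis.orthonormal.1 i
        have : enorm ⇑(hP.eigenvectorBasis i) = 1 := by rw [enorm_eq_norm]; exact hnorm
        have h0 := congrArg (· ^ 2) this
        simpa [enorm_sq] using h0
      have hAv : nsq (A *ᵥ v) = hP.eigenvalues i := by
        have hmv : (Aᴴ * A) *ᵥ v = hP.eigenvalues i • v := by
          rw [hvb]; exact hP.mulVec_eigenvectorBasis i
        have h1 : (nsq (A *ᵥ v) : ℂ) = (hP.eigenvalues i : ℂ) * (nsq v : ℂ) := by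
          rw [nsq_mulVec_eq, hmv, dotProduct_smul, dot_self_eq_nsq, Complex.real_smul]
        rw [hnv] at h1
        exact_mod_cast by simpa using h1
      calc ‖star v ⬝ᵥ ((B * A) *ᵥ v)‖ = ‖star v ⬝ᵥ (B *ᵥ (A *ᵥ v))‖ := by
            rw [← Matrix.mulVec_mulVec]
      _ ≤ enorm v * enorm (B *ᵥ (A *ᵥ v)) := cauchy _ _
      _ ≤ enorm v * (opNorm B * enorm (A *ᵥ v)) :=
          mul_le_mul_of_nonneg_left (enorm_mulVec_le B _) (enorm_nonneg v)
      _ = Real.sqrt (hP.eigenvalues i) * opNorm B := by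
          rw [enorm, enorm, hnv, hAv, Real.sqrt_one]; ring
  _ = traceNorm A * opNorm B := by
      rw [traceNorm, Finset.sum_mul]





end Toolkit

variable {ι : Type*} [Fintype ι] [DecidableEq ι]

-- ## Section B : partial trace combinatorics

lemma merge_mem (Λ : Finset ι) (f : {x // x ∈ Λ} → Fin 2) (g : {x // x ∉ Λ} → Fin 2)
    (x : {x // x ∈ Λ}) : merge Λ f g x.1 = f x := by
  rw [merge, dif_pos x.2, Subtype.coe_eta]

lemma merge_not_mem (Λ : Finset ι) (f : {x // x ∈ Λ} → Fin 2) (g : {x // x ∉ Λ} → Fin 2)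
    (x : {x // x ∉ Λ}) : merge Λ f g x.1 = g x := by
  rw [merge, dif_neg x.2, Subtype.coe_eta]

def mergeEquiv (Λ : Finset ι) :
    (({x // x ∈ Λ} → Fin 2) × ({x // x ∉ Λ} → Fin 2)) ≃ (ι → Fin 2) where
  toFun p := merge Λ p.1 p.2
  invFun f := (fun x => f x.1, fun x => f x.1)
  left_inv p := Prod.ext (funext fun x => merge_mem Λ p.1 p.2 x)
    (funext fun x => merge_not_mem Λ p.1 p.2 x)
  right_inv f := by
    funext x
    by_cases hx : x ∈ Λ
    · exact merge_mem Λ _ _ ⟨x, hx⟩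
    · exact merge_not_mem Λ _ _ ⟨x, hx⟩

lemma embed_merge (Λ : Finset ι) (M : Matrix ({x // x ∈ Λ} → Fin 2) ({x // x ∈ Λ} → Fin 2) ℂ)
    (b a : {x // x ∈ Λ} → Fin 2) (h' h : {x // x ∉ Λ} → Fin 2) :
    embed Λ M (merge Λ b h') (merge Λ a h) = if h' = h then M b a else 0 := by
  rw [embed]
  by_cases hh : h' = h
  · subst hh
    rw [if_pos rfl, if_pos]
    · congr 1 <;> funext x <;> rw [merge_mem]
    · intro x hx
      rw [merge_not_mem Λ b h' ⟨x, hx⟩, merge_not_mem Λ a h' ⟨x, hx⟩]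
  · rw [if_neg hh, if_neg]
    intro hcon
    apply hh
    funext x
    have := hcon x.1 x.2
    rwa [merge_not_mem, merge_not_mem] at this

lemma trace_mul_embed (Λ : Finset ι) (D : QMat ι)
    (M : Matrix ({x // x ∈ Λ} → Fin 2) ({x // x ∈ Λ} → Fin 2) ℂ) :
    (D * embed Λ M).trace = (ptrace Λ D * M).trace := by
  have lhs : (D * embed Λ M).trace = ∑ f, ∑ g, D f g * embed Λ M g f := by
    simp [Matrix.trace, Matrix.mul_apply, Matrix.diag]
  have rhs : (ptrace Λ D * M).trace = ∑ a, ∑ b, ptrace Λ D a b * M b a := by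
    simp [Matrix.trace, Matrix.mul_apply, Matrix.diag]
  rw [lhs, rhs]
  rw [← Equiv.sum_comp (mergeEquiv Λ) (fun f => ∑ g, D f g * embed Λ M g f)]
  have step1 : ∀ p : ({x // x ∈ Λ} → Fin 2) × ({x // x ∉ Λ} → Fin 2),
      (∑ g, D (mergeEquiv Λ p) g * embed Λ M g (mergeEquiv Λ p))
      = ∑ q : ({x // x ∈ Λ} → Fin 2) × ({x // x ∉ Λ} → Fin 2),
          D (mergeEquiv Λ p) (mergeEquiv Λ q) * embed Λ M (mergeEquiv Λ q) (mergeEquiv Λ p) := by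
    intro p
    rw [← Equiv.sum_comp (mergeEquiv Λ)
      (fun g => D (mergeEquiv Λ p) g * embed Λ M g (mergeEquiv Λ p))]
  simp only [step1]
  rw [Fintype.sum_prod_type]
  have step2 : ∀ (a : {x // x ∈ Λ} → Fin 2) (h : {x // x ∉ Λ} → Fin 2),
      (∑ q : ({x // x ∈ Λ} → Fin 2) × ({x // x ∉ Λ} → Fin 2),
        D (mergeEquiv Λ (a, h)) (mergeEquiv Λ q) * embed Λ M (mergeEquiv Λ q) (mergeEquiv Λ (a, h)))
      = ∑ b, D (merge Λ a h) (merge Λ b h) * M b a := by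
    intro a h
    rw [Fintype.sum_prod_type]
    refine Finset.sum_congr rfl fun b _ => ?_
    have : ∀ h' : {x // x ∉ Λ} → Fin 2,
        D (mergeEquiv Λ (a, h)) (mergeEquiv Λ (b, h')) * embed Λ M (mergeEquiv Λ (b, h')) (mergeEquiv Λ (a, h))
        = if h' = h then D (merge Λ a h) (merge Λ b h) * M b a else 0 := by
      intro h'
      show D (merge Λ a h) (merge Λ b h') * embed Λ M (merge Λ b h') (merge Λ a h) = _
      rw [embed_merge]
      by_cases hh : h' = h
      · subst hh; simp
      · simp [hh]
    simp only [this]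
    rw [Finset.sum_ite_eq' Finset.univ h
      (fun _ => D (merge Λ a h) (merge Λ b h) * M b a)]
    simp
  simp only [step2]
  refine Finset.sum_congr rfl fun a _ => ?_
  rw [Finset.sum_comm]
  refine Finset.sum_congr rfl fun b _ => ?_
  rw [ptrace, Finset.sum_mul]

/-- reindexing along the involution `(t, h) ↦ (h x, h[x := t])`. -/
lemma sum_update_invol {κ : Type*} [Fintype κ] [DecidableEq κ] (x : κ)
    (φ : (κ → Fin 2) → ℂ) :
    ∑ p : Fin 2 × (κ → Fin 2), φ (Function.update p.2 x p.1) = 2 * ∑ h, φ h := by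
  have hinv : Function.Involutive
      (fun p : Fin 2 × (κ → Fin 2) => (p.2 x, Function.update p.2 x p.1)) := by
    intro p
    refine Prod.ext ?_ ?_
    · simp
    · simp [Function.update_idem]
  have h1 : ∑ p : Fin 2 × (κ → Fin 2), φ (Function.update p.2 x p.1)
      = ∑ p : Fin 2 × (κ → Fin 2), φ p.2 :=
    Fintype.sum_bijective _ hinv.bijective _ _ (fun p => rfl)
  rw [h1, Fintype.sum_prod_type]
  simp only [Finset.sum_const, Finset.card_univ, Fintype.card_fin, nsmul_eq_mul]
  push_cast
  ring

def complEquiv (x : ι) : Fin 2 ≃ ({y : ι // y ∉ ({x}ᶜ : Finset ι)} → Fin 2) where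
  toFun t := fun _ => t
  invFun h := h ⟨x, by simp⟩
  left_inv t := rfl
  right_inv h := by
    funext y
    have hy : y = (⟨x, by simp⟩ : {y : ι // y ∉ ({x}ᶜ : Finset ι)}) := by
      apply Subtype.ext
      simpa using y.2
    rw [hy]

lemma merge_compl_const (x : ι) (F : ι → Fin 2) (t : Fin 2) :
    merge ({x}ᶜ : Finset ι) (fun y => F y.1) (fun _ => t) = Function.update F x t := by
  funext y
  by_cases hy : y = x
  · subst hy
    rw [merge, dif_neg (by simp), Function.update_self]
  · rw [merge, dif_pos (by simp [hy]), Function.update_of_ne hy]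

lemma ptrace_compl_apply (x : ι) (D : QMat ι) (F G : ι → Fin 2) :
    ptrace ({x}ᶜ : Finset ι) D (fun y => F y.1) (fun y => G y.1)
      = ∑ t : Fin 2, D (Function.update F x t) (Function.update G x t) := by
  rw [ptrace]
  rw [← Equiv.sum_comp (complEquiv x)
    (fun h => D (merge ({x}ᶜ : Finset ι) (fun y => F y.1) h)
      (merge ({x}ᶜ : Finset ι) (fun y => G y.1) h))]
  refine Finset.sum_congr rfl fun t _ => ?_
  show D (merge _ _ (fun _ => t)) (merge _ _ (fun _ => t)) = _
  rw [merge_compl_const, merge_compl_const]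

/-- if the partial trace over qubit `x` vanishes, the two-point sums vanish. -/
lemma sum_update_eq_zero_of_ptrace {x : ι} {D : QMat ι}
    (h : ptrace ({x}ᶜ : Finset ι) D = 0) (F G : ι → Fin 2) :
    ∑ t : Fin 2, D (Function.update F x t) (Function.update G x t) = 0 := by
  rw [← ptrace_compl_apply, h]
  rfl

/-- converse construction direction. -/
lemma ptrace_compl_eq_zero {x : ι} {D : QMat ι}
    (h : ∀ F G : ι → Fin 2,
      ∑ t : Fin 2, D (Function.update F x t) (Function.update G x t) = 0) :
    ptrace ({x}ᶜ : Finset ι) D = 0 := by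
  funext f g
  have hf : f = fun y : {y : ι // y ∈ ({x}ᶜ : Finset ι)} =>
      (merge ({x}ᶜ : Finset ι) f (fun _ => 0)) y.1 := by
    funext y
    rw [merge_mem]
  have hg : g = fun y : {y : ι // y ∈ ({x}ᶜ : Finset ι)} =>
      (merge ({x}ᶜ : Finset ι) g (fun _ => 0)) y.1 := by
    funext y
    rw [merge_mem]
  show ptrace ({x}ᶜ : Finset ι) D f g = 0
  conv_lhs => rw [hf, hg]
  rw [ptrace_compl_apply, h]

/-- vanishing of the full partial trace onto `Λ` when `x ∉ Λ` and `Tr_x D = 0`. -/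
lemma ptrace_eq_zero_of_notMem {x : ι} {Λ : Finset ι} (hx : x ∉ Λ) {D : QMat ι}
    (h : ptrace ({x}ᶜ : Finset ι) D = 0) : ptrace Λ D = 0 := by
  funext a b
  show (∑ h' : {y : ι // y ∉ Λ} → Fin 2, D (merge Λ a h') (merge Λ b h')) = 0
  have key : (2 : ℂ) * ∑ h' : {y : ι // y ∉ Λ} → Fin 2, D (merge Λ a h') (merge Λ b h') = 0 := by
    rw [← sum_update_invol (⟨x, hx⟩ : {y : ι // y ∉ Λ})
      (fun h' => D (merge Λ a h') (merge Λ b h'))]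
    rw [Fintype.sum_prod_type]
    rw [Finset.sum_comm]
    refine Finset.sum_eq_zero fun h' _ => ?_
    have hmm : ∀ t : Fin 2,
        merge Λ a (Function.update h' (⟨x, hx⟩ : {y : ι // y ∉ Λ}) t)
          = Function.update (merge Λ a h') x t := by
      intro t
      funext y
      by_cases hy : y = x
      · subst hy
        rw [merge, dif_neg hx, Function.update_self, Function.update_self]
      · rw [Function.update_of_ne hy]
        by_cases hyΛ : y ∈ Λ
        · rw [merge, dif_pos hyΛ, merge, dif_pos hyΛ]
        · rw [merge, dif_neg hyΛ, merge, dif_neg hyΛ,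
            Function.update_of_ne (fun hc => hy (congrArg Subtype.val hc))]
    have hmm2 : ∀ t : Fin 2,
        merge Λ b (Function.update h' (⟨x, hx⟩ : {y : ι // y ∉ Λ}) t)
          = Function.update (merge Λ b h') x t := by
      intro t
      funext y
      by_cases hy : y = x
      · subst hy
        rw [merge, dif_neg hx, Function.update_self, Function.update_self]
      · rw [Function.update_of_ne hy]
        by_cases hyΛ : y ∈ Λ
        · rw [merge, dif_pos hyΛ, merge, dif_pos hyΛ]
        · rw [merge, dif_neg hyΛ, merge, dif_neg hyΛ,
            Function.update_of_ne (fun hc => hy (congrArg Subtype.val hc))]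
    simp only [hmm, hmm2]
    exact sum_update_eq_zero_of_ptrace h _ _
  have h2 : (2 : ℂ) ≠ 0 := two_ne_zero
  exact (mul_eq_zero.mp key).resolve_left h2

-- ## Section D : the telescoping decomposition for the W1 norm

section Telescope

variable {n : ℕ}

/-- replace the first `k` coordinates of `f` by those of `h`. -/
def mix (k : ℕ) (f h : Fin n → Fin 2) : Fin n → Fin 2 :=
  fun y => if (y : ℕ) < k then h y else f y

/-- `Δ` with the first `k` qubits replaced by the maximally mixed state. -/
def Pk (k : ℕ) (Δ : QMat (Fin n)) : QMat (Fin n) :=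
  fun f g =>
    if ∀ y : Fin n, (y : ℕ) < k → f y = g y then
      ((2 : ℂ) ^ n)⁻¹ * ∑ h, Δ (mix k f h) (mix k g h) else 0

lemma card_fun2 : (Fintype.card (Fin n → Fin 2) : ℂ) = (2 : ℂ) ^ n := by
  rw [Fintype.card_fun]
  simp

lemma Pk_zero (Δ : QMat (Fin n)) : Pk 0 Δ = Δ := by
  funext f g
  rw [Pk, if_pos (fun y hy => absurd hy (Nat.not_lt_zero _))]
  have hmix : ∀ h : Fin n → Fin 2, Δ (mix 0 f h) (mix 0 g h) = Δ f g := by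
    intro h
    congr 1 <;> · funext y; rw [mix, if_neg (Nat.not_lt_zero _)]
  rw [Finset.sum_congr rfl fun h _ => hmix h, Finset.sum_const, Finset.card_univ,
    nsmul_eq_mul, ← mul_assoc, card_fun2]
  rw [inv_mul_cancel₀ (by positivity), one_mul]

lemma Pk_n (Δ : QMat (Fin n)) (hΔ : Δ.trace = 0) : Pk n Δ = 0 := by
  funext f g
  rw [Pk]
  by_cases hfg : ∀ y : Fin n, (y : ℕ) < n → f y = g y
  · rw [if_pos hfg]
    have hmix : ∀ h : Fin n → Fin 2, Δ (mix n f h) (mix n g h) = Δ h h := by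
      intro h
      congr 1 <;> · funext y; rw [mix, if_pos y.2]
    rw [Finset.sum_congr rfl fun h _ => hmix h]
    have : ∑ h : Fin n → Fin 2, Δ h h = Δ.trace := rfl
    rw [this, hΔ, mul_zero]
    rfl
  · rw [if_neg hfg]
    rfl

lemma Pk_isHermitian {Δ : QMat (Fin n)} (hΔ : Δ.IsHermitian) (k : ℕ) :
    (Pk k Δ).IsHermitian := by
  rw [Matrix.IsHermitian]
  funext f g
  rw [Matrix.conjTranspose_apply, Pk, Pk]
  by_cases hfg : ∀ y : Fin n, (y : ℕ) < k → f y = g y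
  · rw [if_pos hfg, if_pos (fun y hy => (hfg y hy).symm)]
    rw [star_mul', star_inv₀]
    simp only [star_sum]
    have : ∀ h : Fin n → Fin 2, star (Δ (mix k g h) (mix k f h)) = Δ (mix k f h) (mix k g h) := by
      intro h
      rw [← Matrix.conjTranspose_apply, hΔ]
    rw [Finset.sum_congr rfl fun h _ => this h]
    congr 1
    simp
  · rw [if_neg hfg, if_neg (fun hcon => hfg fun y hy => (hcon y hy).symm), star_zero]

lemma Pk_trace (Δ : QMat (Fin n)) (k : ℕ) : (Pk k Δ).trace = Δ.trace := by
  have hinv : Function.Involutive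
      (fun p : (Fin n → Fin 2) × (Fin n → Fin 2) => (mix k p.1 p.2, mix k p.2 p.1)) := by
    intro p
    refine Prod.ext ?_ ?_ <;>
    · funext y
      by_cases hy : (y : ℕ) < k <;> simp [mix, hy]
  have key : ∑ p : (Fin n → Fin 2) × (Fin n → Fin 2), Δ (mix k p.1 p.2) (mix k p.1 p.2)
      = ∑ p : (Fin n → Fin 2) × (Fin n → Fin 2), Δ p.1 p.1 :=
    Fintype.sum_bijective _ hinv.bijective _ _ (fun p => rfl)
  have lhs : (Pk k Δ).trace = ((2 : ℂ) ^ n)⁻¹ *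
      ∑ p : (Fin n → Fin 2) × (Fin n → Fin 2), Δ (mix k p.1 p.2) (mix k p.1 p.2) := by
    rw [Matrix.trace, Fintype.sum_prod_type, Finset.mul_sum]
    refine Finset.sum_congr rfl fun f _ => ?_
    rw [Matrix.diag_apply, Pk, if_pos (fun y _ => rfl)]
  rw [lhs, key, Fintype.sum_prod_type]
  simp only [Finset.sum_const, Finset.card_univ, nsmul_eq_mul]
  rw [← Finset.mul_sum, card_fun2, ← mul_assoc, inv_mul_cancel₀ (by positivity), one_mul]
  rfl

lemma mix_update_left (x : Fin n) (F h : Fin n → Fin 2) (t : Fin 2) :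
    mix (x : ℕ) (Function.update F x t) h = mix ((x : ℕ) + 1) F (Function.update h x t) := by
  funext y
  by_cases hyx : y = x
  · subst hyx
    rw [mix, mix, if_neg (lt_irrefl _), if_pos (Nat.lt_succ_self _), Function.update_self,
      Function.update_self]
  · have hyx' : (y : ℕ) ≠ (x : ℕ) := fun hc => hyx (Fin.ext hc)
    rw [mix, mix, Function.update_of_ne hyx, Function.update_of_ne hyx]
    by_cases hy : (y : ℕ) < (x : ℕ)
    · rw [if_pos hy, if_pos (Nat.lt_succ_of_lt hy)]
    · rw [if_neg hy, if_neg (by omega)]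

lemma mix_update_right (x : Fin n) (F h : Fin n → Fin 2) (t : Fin 2) :
    mix ((x : ℕ) + 1) (Function.update F x t) h = mix ((x : ℕ) + 1) F h := by
  funext y
  by_cases hyx : y = x
  · subst hyx
    rw [mix, mix, if_pos (Nat.lt_succ_self _), if_pos (Nat.lt_succ_self _)]
  · rw [mix, mix, Function.update_of_ne hyx]

lemma cond_update_left (x : Fin n) (F G : Fin n → Fin 2) (t : Fin 2) :
    (∀ y : Fin n, (y : ℕ) < (x : ℕ) →
        Function.update F x t y = Function.update G x t y)
      ↔ (∀ y : Fin n, (y : ℕ) < (x : ℕ) → F y = G y) := by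
  constructor <;> intro hC y hy <;>
  · have hyx : y ≠ x := fun hc => by rw [hc] at hy; omega
    have := hC y hy
    rwa [Function.update_of_ne hyx, Function.update_of_ne hyx] at *

lemma cond_update_right (x : Fin n) (F G : Fin n → Fin 2) (t : Fin 2) :
    (∀ y : Fin n, (y : ℕ) < (x : ℕ) + 1 →
        Function.update F x t y = Function.update G x t y)
      ↔ (∀ y : Fin n, (y : ℕ) < (x : ℕ) → F y = G y) := by
  constructor
  · intro hC y hy
    have hyx : y ≠ x := fun hc => by rw [hc] at hy; omega
    have := hC y (Nat.lt_succ_of_lt hy)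
    rwa [Function.update_of_ne hyx, Function.update_of_ne hyx] at this
  · intro hC y hy
    by_cases hyx : y = x
    · subst hyx
      rw [Function.update_self, Function.update_self]
    · have hyx' : (y : ℕ) ≠ (x : ℕ) := fun hc => hyx (Fin.ext hc)
      rw [Function.update_of_ne hyx, Function.update_of_ne hyx]
      exact hC y (by omega)

lemma Pk_step (Δ : QMat (Fin n)) (x : Fin n) (F G : Fin n → Fin 2) :
    ∑ t : Fin 2, Pk (x : ℕ) Δ (Function.update F x t) (Function.update G x t)
      = ∑ t : Fin 2, Pk ((x : ℕ) + 1) Δ (Function.update F x t) (Function.update G x t) := by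
  by_cases hC : ∀ y : Fin n, (y : ℕ) < (x : ℕ) → F y = G y
  · have lhs : ∀ t : Fin 2, Pk (x : ℕ) Δ (Function.update F x t) (Function.update G x t)
        = ((2 : ℂ) ^ n)⁻¹ * ∑ h, Δ (mix ((x : ℕ) + 1) F (Function.update h x t))
            (mix ((x : ℕ) + 1) G (Function.update h x t)) := by
      intro t
      rw [Pk, if_pos ((cond_update_left x F G t).mpr hC)]
      congr 1
      refine Finset.sum_congr rfl fun h _ => ?_
      rw [mix_update_left, mix_update_left]
    have rhs : ∀ t : Fin 2, Pk ((x : ℕ) + 1) Δ (Function.update F x t) (Function.update G x t)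
        = ((2 : ℂ) ^ n)⁻¹ * ∑ h, Δ (mix ((x : ℕ) + 1) F h) (mix ((x : ℕ) + 1) G h) := by
      intro t
      rw [Pk, if_pos ((cond_update_right x F G t).mpr hC)]
      congr 1
      refine Finset.sum_congr rfl fun h _ => ?_
      rw [mix_update_right, mix_update_right]
    simp only [lhs, rhs]
    rw [← Finset.mul_sum, ← Finset.mul_sum]
    congr 1
    have split : ∑ t : Fin 2, ∑ h, Δ (mix ((x : ℕ) + 1) F (Function.update h x t))
          (mix ((x : ℕ) + 1) G (Function.update h x t))
        = ∑ p : Fin 2 × (Fin n → Fin 2),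
            (fun h' => Δ (mix ((x : ℕ) + 1) F h') (mix ((x : ℕ) + 1) G h'))
              (Function.update p.2 x p.1) := by
      rw [Fintype.sum_prod_type]
    rw [split, sum_update_invol x
      (fun h' => Δ (mix ((x : ℕ) + 1) F h') (mix ((x : ℕ) + 1) G h'))]
    simp [Finset.sum_const]
  · have lhs : ∀ t : Fin 2, Pk (x : ℕ) Δ (Function.update F x t) (Function.update G x t) = 0 := by
      intro t
      rw [Pk, if_neg (fun hc => hC ((cond_update_left x F G t).mp hc))]
    have rhs : ∀ t : Fin 2,
        Pk ((x : ℕ) + 1) Δ (Function.update F x t) (Function.update G x t) = 0 := by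
      intro t
      rw [Pk, if_neg (fun hc => hC ((cond_update_right x F G t).mp hc))]
    simp only [lhs, rhs]

/-- one term of the telescoping decomposition. -/
def DD (Δ : QMat (Fin n)) (x : Fin n) : QMat (Fin n) :=
  Pk (x : ℕ) Δ - Pk ((x : ℕ) + 1) Δ

lemma DD_isHermitian {Δ : QMat (Fin n)} (hΔ : Δ.IsHermitian) (x : Fin n) :
    (DD Δ x).IsHermitian :=
  (Pk_isHermitian hΔ _).sub (Pk_isHermitian hΔ _)

lemma DD_trace (Δ : QMat (Fin n)) (x : Fin n) : (DD Δ x).trace = 0 := by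
  rw [DD, Matrix.trace_sub, Pk_trace, Pk_trace, sub_self]

lemma DD_ptrace (Δ : QMat (Fin n)) (x : Fin n) :
    ptrace ({x}ᶜ : Finset (Fin n)) (DD Δ x) = 0 := by
  apply ptrace_compl_eq_zero
  intro F G
  have : ∀ t : Fin 2, DD Δ x (Function.update F x t) (Function.update G x t)
      = Pk (x : ℕ) Δ (Function.update F x t) (Function.update G x t)
        - Pk ((x : ℕ) + 1) Δ (Function.update F x t) (Function.update G x t) := fun t => rfl
  simp only [this]
  rw [Finset.sum_sub_distrib, Pk_step, sub_self]

lemma DD_sum (Δ : QMat (Fin n)) (hΔ : Δ.trace = 0) : ∑ x, DD Δ x = Δ := by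
  have h1 : ∑ x : Fin n, DD Δ x = ∑ i ∈ Finset.range n, (Pk i Δ - Pk (i + 1) Δ) :=
    Fin.sum_univ_eq_sum_range (fun i => Pk i Δ - Pk (i + 1) Δ) n
  rw [h1, Finset.sum_range_sub' (fun i => Pk i Δ), Pk_zero, Pk_n Δ hΔ, sub_zero]

end Telescope

-- ## Section E : spectral calculus for the Gibbs state

section Spectral

variable {d : Type*} [Fintype d] [DecidableEq d]

@[simp] lemma rcOfReal' (x : ℝ) : (RCLike.ofReal x : ℂ) = (x : ℂ) := rfl

/-- conjugation by a unitary as an `ℝ`-algebra homomorphism. -/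
def conjAlgHom (V : Matrix.unitaryGroup d ℂ) : Matrix d d ℂ →ₐ[ℝ] Matrix d d ℂ where
  toFun M := (V : Matrix d d ℂ) * M * star (V : Matrix d d ℂ)
  map_one' := by
    show (V : Matrix d d ℂ) * 1 * star (V : Matrix d d ℂ) = 1
    rw [mul_one]
    exact Matrix.mem_unitaryGroup_iff.mp V.2
  map_mul' A B := by
    have h : star (V : Matrix d d ℂ) * (V : Matrix d d ℂ) = 1 :=
      Matrix.mem_unitaryGroup_iff'.mp V.2
    show (V : Matrix d d ℂ) * (A * B) * star (V : Matrix d d ℂ)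
        = ((V : Matrix d d ℂ) * A * star (V : Matrix d d ℂ))
          * ((V : Matrix d d ℂ) * B * star (V : Matrix d d ℂ))
    calc (V : Matrix d d ℂ) * (A * B) * star (V : Matrix d d ℂ)
        = (V : Matrix d d ℂ) * A * ((star (V : Matrix d d ℂ) * (V : Matrix d d ℂ))
            * (B * star (V : Matrix d d ℂ))) := by
          rw [h, one_mul]
          simp only [Matrix.mul_assoc]
      _ = ((V : Matrix d d ℂ) * A * star (V : Matrix d d ℂ))
          * ((V : Matrix d d ℂ) * B * star (V : Matrix d d ℂ)) := by
          simp only [Matrix.mul_assoc]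
  map_zero' := by
    show (V : Matrix d d ℂ) * 0 * star (V : Matrix d d ℂ) = 0
    rw [mul_zero, zero_mul]
  map_add' A B := by
    show (V : Matrix d d ℂ) * (A + B) * star (V : Matrix d d ℂ) = _
    rw [mul_add, add_mul]
  commutes' r := by
    have hVstar : (V : Matrix d d ℂ) * star (V : Matrix d d ℂ) = 1 :=
      Matrix.mem_unitaryGroup_iff.mp V.2
    show (V : Matrix d d ℂ) * algebraMap ℝ (Matrix d d ℂ) r * star (V : Matrix d d ℂ) = _
    rw [Algebra.algebraMap_eq_smul_one, Matrix.mul_smul, Matrix.mul_one, Matrix.smul_mul, hVstar]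

/-- `diagonal` as an `ℝ`-algebra homomorphism. -/
def diagAlgHom : ((d → ℂ)) →ₐ[ℝ] Matrix d d ℂ :=
  { Matrix.diagonalRingHom d ℂ with
    commutes' := fun r => by
      show Matrix.diagonal (algebraMap ℝ (d → ℂ) r) = algebraMap ℝ (Matrix d d ℂ) r
      rw [Matrix.algebraMap_eq_diagonal] }

lemma aeval_diag_entry (p : Polynomial ℝ) (v : d → ℂ) (i : d) :
    (Polynomial.aeval v p : d → ℂ) i = Polynomial.aeval (v i) p :=
  (Polynomial.aeval_algHom_apply (Pi.evalAlgHom ℝ (fun _ => ℂ) i) v p).symm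

lemma aeval_ofReal (p : Polynomial ℝ) (x : ℝ) :
    Polynomial.aeval ((x : ℂ)) p = ((Polynomial.eval x p : ℝ) : ℂ) := by
  have := Polynomial.aeval_algebraMap_apply_eq_algebraMap_eval (A := ℂ) x p
  simpa [Polynomial.aeval_def, Complex.coe_algebraMap] using this

lemma aeval_unitary_diag (p : Polynomial ℝ) (V : Matrix.unitaryGroup d ℂ) (w : d → ℝ) :
    Polynomial.aeval ((V : Matrix d d ℂ) * Matrix.diagonal (fun i => (w i : ℂ))
        * star (V : Matrix d d ℂ)) p
      = (V : Matrix d d ℂ) * Matrix.diagonal (fun i => ((Polynomial.eval (w i) p : ℝ) : ℂ))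
        * star (V : Matrix d d ℂ) := by
  have h1 : (V : Matrix d d ℂ) * Matrix.diagonal (fun i => (w i : ℂ)) * star (V : Matrix d d ℂ)
      = conjAlgHom V (diagAlgHom (fun i => (w i : ℂ))) := rfl
  rw [h1, Polynomial.aeval_algHom_apply, Polynomial.aeval_algHom_apply]
  have h2 : Polynomial.aeval (fun i => (w i : ℂ)) p
      = fun i => ((Polynomial.eval (w i) p : ℝ) : ℂ) := by
    funext i
    rw [aeval_diag_entry, aeval_ofReal]
  rw [h2]
  rfl

lemma isHermitian_unitary_diag (V : Matrix.unitaryGroup d ℂ) (w : d → ℝ) :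
    ((V : Matrix d d ℂ) * Matrix.diagonal (fun i => (w i : ℂ))
        * star (V : Matrix d d ℂ)).IsHermitian := by
  rw [Matrix.IsHermitian, Matrix.conjTranspose_mul, Matrix.conjTranspose_mul,
    Matrix.star_eq_conjTranspose, Matrix.conjTranspose_conjTranspose,
    Matrix.diagonal_conjTranspose]
  have : (star (fun i => (w i : ℂ))) = fun i => (w i : ℂ) := by
    funext i
    simp [Pi.star_apply, Complex.conj_ofReal]
  rw [this, Matrix.mul_assoc]

/-- any unitary diagonalization with positive real diagonal computes `mlog`. -/
lemma mlog_eq {A : Matrix d d ℂ} (V : Matrix.unitaryGroup d ℂ) (w : d → ℝ)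
    (hw : ∀ i, 0 < w i)
    (hA : A = (V : Matrix d d ℂ) * Matrix.diagonal (fun i => (w i : ℂ))
      * star (V : Matrix d d ℂ)) :
    mlog A = (V : Matrix d d ℂ) * Matrix.diagonal (fun i => ((Real.log (w i) : ℝ) : ℂ))
      * star (V : Matrix d d ℂ) := by
  have hherm : A.IsHermitian := hA ▸ isHermitian_unitary_diag V w
  set T : Finset ℝ :=
    Finset.image hherm.eigenvalues Finset.univ ∪ Finset.image w Finset.univ with hT
  set p : Polynomial ℝ := Lagrange.interpolate T id Real.log with hp
  have heval : ∀ r ∈ T, Polynomial.eval r p = Real.log r := by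
    intro r hr
    have := Lagrange.eval_interpolate_at_node (r := Real.log) (v := id)
      (Set.injOn_id _) hr
    simpa [hp] using this
  have way1 : Polynomial.aeval A p
      = (hherm.eigenvectorUnitary : Matrix d d ℂ) *
          Matrix.diagonal (fun i => (Real.log (hherm.eigenvalues i) : ℂ)) *
          star (hherm.eigenvectorUnitary : Matrix d d ℂ) := by
    have hsp : A = (hherm.eigenvectorUnitary : Matrix d d ℂ) *
        Matrix.diagonal (fun i => ((hherm.eigenvalues i : ℝ) : ℂ)) *
        star (hherm.eigenvectorUnitary : Matrix d d ℂ) := by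
      have := hherm.spectral_theorem
      exact this
    conv_lhs => rw [hsp]
    rw [aeval_unitary_diag]
    have h3 : (fun i => ((Polynomial.eval (hherm.eigenvalues i) p : ℝ) : ℂ))
        = fun i => ((Real.log (hherm.eigenvalues i) : ℝ) : ℂ) := by
      funext i
      rw [heval _ (Finset.mem_union_left _ (Finset.mem_image_of_mem _ (Finset.mem_univ i)))]
    rw [h3]
  have way2 : Polynomial.aeval A p
      = (V : Matrix d d ℂ) * Matrix.diagonal (fun i => ((Real.log (w i) : ℝ) : ℂ))
        * star (V : Matrix d d ℂ) := by
    conv_lhs => rw [hA]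
    rw [aeval_unitary_diag]
    have h3 : (fun i => ((Polynomial.eval (w i) p : ℝ) : ℂ))
        = fun i => ((Real.log (w i) : ℝ) : ℂ) := by
      funext i
      rw [heval _ (Finset.mem_union_right _ (Finset.mem_image_of_mem _ (Finset.mem_univ i)))]
    rw [h3]
  rw [mlog, dif_pos hherm, ← way1, way2]

lemma quad_unitary_diag (V : Matrix.unitaryGroup d ℂ) (c : d → ℂ) (x : d → ℂ) :
    star x ⬝ᵥ (((V : Matrix d d ℂ) * Matrix.diagonal c * star (V : Matrix d d ℂ)) *ᵥ x)
      = ∑ i, c i * Complex.normSq ((star (V : Matrix d d ℂ) *ᵥ x) i) := by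
  set U : Matrix d d ℂ := (V : Matrix d d ℂ)
  set w := star U *ᵥ x with hw
  have hPv : (U * Matrix.diagonal c * star U) *ᵥ x = U *ᵥ (Matrix.diagonal c *ᵥ w) := by
    rw [hw, ← Matrix.mulVec_mulVec, ← Matrix.mulVec_mulVec]
  rw [hPv]
  have hdot : star x ⬝ᵥ (U *ᵥ (Matrix.diagonal c *ᵥ w)) = star w ⬝ᵥ (Matrix.diagonal c *ᵥ w) := by
    rw [Matrix.dotProduct_mulVec (star x) U]
    congr 1
    rw [hw, Matrix.star_mulVec, Matrix.star_eq_conjTranspose, Matrix.conjTranspose_conjTranspose]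
  rw [hdot, dotProduct]
  refine Finset.sum_congr rfl fun i _ => ?_
  rw [Matrix.mulVec_diagonal]
  simp only [Pi.star_apply, RCLike.star_def, Complex.normSq_eq_conj_mul_self]
  ring

lemma isUnit_unitary (V : Matrix.unitaryGroup d ℂ) : IsUnit (V : Matrix d d ℂ) := by
  refine ⟨⟨(V : Matrix d d ℂ), star (V : Matrix d d ℂ), ?_, ?_⟩, rfl⟩
  · exact Matrix.mem_unitaryGroup_iff.mp V.2
  · exact Matrix.mem_unitaryGroup_iff'.mp V.2

end Spectral

section Gibbs

variable {H : QMat ι}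

lemma exp_neg_eq (hH : H.IsHermitian) :
    NormedSpace.exp (-H) = ((hH.neg.eigenvectorUnitary : QMat ι)) *
      Matrix.diagonal (fun i => ((Real.exp (hH.neg.eigenvalues i) : ℝ) : ℂ)) *
      star (hH.neg.eigenvectorUnitary : QMat ι) := by
  have hm : (-H).IsHermitian := hH.neg
  set U : QMat ι := (hH.neg.eigenvectorUnitary : QMat ι) with hU
  have hinv : U⁻¹ = star U :=
    Matrix.inv_eq_left_inv (Matrix.mem_unitaryGroup_iff'.mp (hH.neg.eigenvectorUnitary).2)
  have h1 : -H = U * Matrix.diagonal (RCLike.ofReal ∘ hH.neg.eigenvalues) * U⁻¹ := by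
    rw [hinv]
    exact hH.neg.spectral_theorem
  have h2 : NormedSpace.exp (-H) = NormedSpace.exp
      (U * Matrix.diagonal (RCLike.ofReal ∘ hH.neg.eigenvalues) * U⁻¹) := congrArg _ h1
  rw [h2, Matrix.exp_conj U _ (isUnit_unitary hH.neg.eigenvectorUnitary), Matrix.exp_diagonal,
    hinv]
  have h3 : NormedSpace.exp (RCLike.ofReal ∘ hH.neg.eigenvalues)
      = fun i => ((Real.exp (hH.neg.eigenvalues i) : ℝ) : ℂ) := by
    funext i
    rw [Pi.coe_exp]
    show NormedSpace.exp ((hH.neg.eigenvalues i : ℝ) : ℂ) = _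
    rw [← Complex.exp_eq_exp_ℂ, ← Complex.ofReal_exp]
  rw [h3]

lemma trace_exp_neg (hH : H.IsHermitian) :
    (NormedSpace.exp (-H)).trace = ((∑ i, Real.exp (hH.neg.eigenvalues i) : ℝ) : ℂ) := by
  rw [exp_neg_eq hH, Matrix.trace_mul_cycle,
    Matrix.mem_unitaryGroup_iff'.mp (hH.neg.eigenvectorUnitary).2, Matrix.one_mul,
    Matrix.trace_diagonal]
  push_cast
  rfl

lemma Zexp_pos (hH : H.IsHermitian) : 0 < ∑ i, Real.exp (hH.neg.eigenvalues i) :=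
  Finset.sum_pos (fun i _ => Real.exp_pos _) Finset.univ_nonempty

lemma gibbs_eq (hH : H.IsHermitian) :
    gibbs H = ((hH.neg.eigenvectorUnitary : QMat ι)) *
      Matrix.diagonal (fun i =>
        ((Real.exp (hH.neg.eigenvalues i) / (∑ j, Real.exp (hH.neg.eigenvalues j)) : ℝ) : ℂ)) *
      star (hH.neg.eigenvectorUnitary : QMat ι) := by
  rw [gibbs, trace_exp_neg hH, exp_neg_eq hH, ← Matrix.smul_mul, ← Matrix.mul_smul]
  rw [← Matrix.diagonal_smul]
  have h3 : (((∑ j, Real.exp (hH.neg.eigenvalues j) : ℝ) : ℂ))⁻¹ •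
        (fun i => ((Real.exp (hH.neg.eigenvalues i) : ℝ) : ℂ))
      = fun i => ((Real.exp (hH.neg.eigenvalues i)
          / (∑ j, Real.exp (hH.neg.eigenvalues j)) : ℝ) : ℂ) := by
    funext i
    rw [Pi.smul_apply, smul_eq_mul, Complex.ofReal_div, div_eq_inv_mul]
  rw [h3]

lemma gibbs_isState (hH : H.IsHermitian) : IsState (gibbs H) := by
  constructor
  · rw [Matrix.posSemidef_iff_dotProduct_mulVec]
    constructor
    · rw [gibbs_eq hH]
      exact isHermitian_unitary_diag _ _
    · intro x
      rw [gibbs_eq hH, quad_unitary_diag]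
      have : ∀ i : ι → Fin 2, ((Real.exp (hH.neg.eigenvalues i)
            / (∑ j, Real.exp (hH.neg.eigenvalues j)) : ℝ) : ℂ)
          * Complex.normSq ((star ((hH.neg.eigenvectorUnitary : QMat ι)) *ᵥ x) i)
          = (((Real.exp (hH.neg.eigenvalues i) / (∑ j, Real.exp (hH.neg.eigenvalues j)))
              * Complex.normSq ((star ((hH.neg.eigenvectorUnitary : QMat ι)) *ᵥ x) i) : ℝ) : ℂ) := by
        intro i
        push_cast
        ring
      rw [Finset.sum_congr rfl fun i _ => this i, ← Complex.ofReal_sum]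
      rw [Complex.zero_le_real]
      refine Finset.sum_nonneg fun i _ => mul_nonneg ?_ (Complex.normSq_nonneg _)
      exact div_nonneg (Real.exp_pos _).le (Zexp_pos hH).le
  · rw [gibbs, Matrix.trace_smul, trace_exp_neg hH, smul_eq_mul]
    exact inv_mul_cancel₀ (Complex.ofReal_ne_zero.mpr (Zexp_pos hH).ne')

lemma mlog_gibbs (hH : H.IsHermitian) :
    mlog (gibbs H) = (-H) -
      ((Real.log (∑ i, Real.exp (hH.neg.eigenvalues i)) : ℝ) : ℂ) • 1 := by
  set Z : ℝ := ∑ i, Real.exp (hH.neg.eigenvalues i) with hZ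
  have hml := mlog_eq hH.neg.eigenvectorUnitary
    (fun i => Real.exp (hH.neg.eigenvalues i) / Z)
    (fun i => div_pos (Real.exp_pos _) (Zexp_pos hH)) (gibbs_eq hH)
  rw [hml]
  have hlog : (fun i => ((Real.log (Real.exp (hH.neg.eigenvalues i) / Z) : ℝ) : ℂ))
      = fun i => ((hH.neg.eigenvalues i : ℝ) : ℂ) - ((Real.log Z : ℝ) : ℂ) := by
    funext i
    rw [Real.log_div (Real.exp_ne_zero _) (Zexp_pos hH).ne', Real.log_exp]
    push_cast
    ring
  rw [hlog]
  have hdiag : Matrix.diagonal (fun i : ι → Fin 2 =>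
        ((hH.neg.eigenvalues i : ℝ) : ℂ) - ((Real.log Z : ℝ) : ℂ))
      = Matrix.diagonal (RCLike.ofReal ∘ hH.neg.eigenvalues)
        - ((Real.log Z : ℝ) : ℂ) • 1 := by
    rw [Matrix.smul_one_eq_diagonal, ← Matrix.diagonal_sub]
    rfl
  rw [hdiag, Matrix.mul_sub, Matrix.sub_mul]
  congr 1
  · exact (hH.neg.spectral_theorem).symm
  · rw [Matrix.mul_smul, Matrix.mul_one, Matrix.smul_mul,
      Matrix.mem_unitaryGroup_iff.mp (hH.neg.eigenvectorUnitary).2]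

lemma relEnt_add_relEnt {H K : QMat ι} (hH : H.IsHermitian) (hK : K.IsHermitian) :
    relEnt (gibbs H) (gibbs K) + relEnt (gibbs K) (gibbs H)
      = (((gibbs H - gibbs K) * (K - H)).trace).re := by
  set a : ℂ := ((Real.log (∑ i, Real.exp (hH.neg.eigenvalues i)) : ℝ) : ℂ) with ha
  set b : ℂ := ((Real.log (∑ i, Real.exp (hK.neg.eigenvalues i)) : ℝ) : ℂ) with hb
  have hX : mlog (gibbs H) - mlog (gibbs K) = (K - H) + (b - a) • 1 := by
    rw [mlog_gibbs hH, mlog_gibbs hK, ← ha, ← hb]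
    module
  have htr0 : (gibbs H - gibbs K).trace = 0 := by
    rw [Matrix.trace_sub, (gibbs_isState hH).2, (gibbs_isState hK).2, sub_self]
  rw [relEnt, relEnt]
  have h1 : mlog (gibbs K) - mlog (gibbs H) = -(mlog (gibbs H) - mlog (gibbs K)) :=
    (neg_sub _ _).symm
  rw [h1]
  have h2 : (gibbs H * (mlog (gibbs H) - mlog (gibbs K))).trace
        + (gibbs K * -(mlog (gibbs H) - mlog (gibbs K))).trace
      = ((gibbs H - gibbs K) * (mlog (gibbs H) - mlog (gibbs K))).trace := by
    rw [Matrix.mul_neg, Matrix.sub_mul, Matrix.trace_sub, Matrix.trace_neg]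
    ring
  rw [← Complex.add_re, h2, hX, Matrix.mul_add, Matrix.trace_add, Matrix.mul_smul,
    Matrix.mul_one, Matrix.trace_smul, htr0, smul_zero, add_zero]

end Gibbs

-- ## Section C : local norm and the dual sets

section LocNorm

variable (c : ℕ → ℝ)

def locSet (H : QMat ι) : Set ℝ :=
  { r : ℝ | ∃ F : Finset ι → QMat ι, (∀ Λ, ActsOn Λ (F Λ)) ∧ H = ∑ Λ, F Λ ∧
    r = 2 * ⨆ x : ι, ∑ Λ ∈ Finset.univ.filter (fun Λ : Finset ι => x ∈ Λ),
      c Λ.card * opNorm (F Λ) }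

lemma localNorm_eq (H : QMat ι) : localNorm c H = sInf (locSet c H) := rfl

def W1SetOf (Δ : QMat ι) : Set ℝ :=
  { r : ℝ | ∃ D : ι → QMat ι,
    (∀ x, (D x).IsHermitian ∧ (D x).trace = 0 ∧ ptrace ({x}ᶜ : Finset ι) (D x) = 0) ∧
    Δ = ∑ x, D x ∧ r = (1 / 2) * ∑ x, traceNorm (D x) }

lemma W1_eq (Δ : QMat ι) : W1 Δ = sInf (W1SetOf Δ) := rfl

def W1locSetOf (Δ : QMat ι) : Set ℝ :=
  { r : ℝ | ∃ H : QMat ι, H.IsHermitian ∧ localNorm c H ≤ 1 ∧ r = ((Δ * H).trace).re }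

lemma W1loc_eq (Δ : QMat ι) : W1loc c Δ = sSup (W1locSetOf c Δ) := rfl

variable {c}

lemma iSup_zero_real {κ : Sort*} : (⨆ _ : κ, (0 : ℝ)) = 0 := by
  by_cases hk : Nonempty κ
  · exact ciSup_const
  · rw [not_nonempty_iff] at hk
    exact Real.iSup_of_isEmpty _

lemma actsOn_zero (Λ : Finset ι) : ActsOn Λ (0 : QMat ι) := by
  refine ⟨0, Matrix.isHermitian_zero, ?_⟩
  funext f g
  rw [embed]
  split <;> simp

lemma actsOn_univ {H : QMat ι} (hH : H.IsHermitian) : ActsOn Finset.univ H := by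
  refine ⟨fun a b => H (fun y => a ⟨y, Finset.mem_univ y⟩) (fun y => b ⟨y, Finset.mem_univ y⟩),
    ?_, ?_⟩
  · funext a b
    show star (H _ _) = H _ _
    rw [← Matrix.conjTranspose_apply H, hH]
  · funext f g
    simp only [embed]
    rw [if_pos (fun x hx => absurd (Finset.mem_univ x) hx)]

lemma locSet_nonempty {H : QMat ι} (hH : H.IsHermitian) : (locSet c H).Nonempty := by
  classical
  refine ⟨_, fun Λ => if Λ = Finset.univ then H else 0, fun Λ => ?_, ?_, rfl⟩
  · show ActsOn Λ (if Λ = Finset.univ then H else 0)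
    by_cases hΛ : Λ = Finset.univ
    · subst hΛ
      rw [if_pos rfl]
      exact actsOn_univ hH
    · rw [if_neg hΛ]
      exact actsOn_zero Λ
  · rw [Finset.sum_ite_eq' Finset.univ Finset.univ (fun _ => H), if_pos (Finset.mem_univ _)]

variable (hcard : ∀ Λ : Finset ι, Λ.Nonempty → 1 ≤ c Λ.card)
include hcard

lemma sum_filter_nonneg (F : Finset ι → QMat ι) (x : ι) :
    0 ≤ ∑ Λ ∈ Finset.univ.filter (fun Λ : Finset ι => x ∈ Λ), c Λ.card * opNorm (F Λ) := by
  refine Finset.sum_nonneg fun Λ hΛ => ?_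
  have hx : x ∈ Λ := (Finset.mem_filter.mp hΛ).2
  have h1 : (1 : ℝ) ≤ c Λ.card := hcard Λ ⟨x, hx⟩
  exact mul_nonneg (le_trans zero_le_one h1) (opNorm_nonneg _)

lemma locSet_nonneg : ∀ r ∈ locSet c (H : QMat ι), 0 ≤ r := by
  rintro r ⟨F, _, _, rfl⟩
  have : (0 : ℝ) ≤ ⨆ x : ι, ∑ Λ ∈ Finset.univ.filter (fun Λ : Finset ι => x ∈ Λ),
      c Λ.card * opNorm (F Λ) :=
    Real.iSup_nonneg fun x => sum_filter_nonneg hcard F x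
  linarith

lemma locSet_bddBelow {H : QMat ι} : BddBelow (locSet c H) :=
  ⟨0, fun _ hr => locSet_nonneg hcard _ hr⟩

lemma localNorm_nonneg (H : QMat ι) : 0 ≤ localNorm c H := by
  rw [localNorm_eq]
  exact Real.sInf_nonneg (fun r hr => locSet_nonneg hcard r hr)

lemma localNorm_zero_le_one : localNorm c (0 : QMat ι) ≤ 1 := by
  have hmem : (0 : ℝ) ∈ locSet c (0 : QMat ι) := by
    refine ⟨fun _ => 0, fun Λ => actsOn_zero Λ, by simp, ?_⟩
    have h1 : ∀ x : ι, ∑ Λ ∈ Finset.univ.filter (fun Λ : Finset ι => x ∈ Λ),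
        c Λ.card * opNorm ((0 : QMat ι)) = 0 := by
      intro x
      refine Finset.sum_eq_zero fun Λ _ => ?_
      rw [opNorm_zero, mul_zero]
    simp only [h1]
    rw [iSup_zero_real, mul_zero]
  have := csInf_le (locSet_bddBelow hcard) hmem
  rw [localNorm_eq]
  linarith

lemma exists_good_decomp {H : QMat ι} (hH : H.IsHermitian) {b ε : ℝ} (hε : 0 < ε)
    (hb : localNorm c H ≤ b) :
    ∃ F : Finset ι → QMat ι, (∀ Λ, ActsOn Λ (F Λ)) ∧ H = ∑ Λ, F Λ ∧
      2 * (⨆ x : ι, ∑ Λ ∈ Finset.univ.filter (fun Λ : Finset ι => x ∈ Λ),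
        c Λ.card * opNorm (F Λ)) < b + ε := by
  have hlt : sInf (locSet c H) < b + ε := by
    rw [← localNorm_eq]
    linarith
  obtain ⟨r, hrmem, hrlt⟩ := exists_lt_of_csInf_lt (locSet_nonempty hH) hlt
  obtain ⟨F, hF1, hF2, rfl⟩ := hrmem
  exact ⟨F, hF1, hF2, hrlt⟩

omit hcard in
lemma W1SetOf_nonneg : ∀ r ∈ W1SetOf (Δ : QMat ι), 0 ≤ r := by
  rintro r ⟨D, _, _, rfl⟩
  have : (0 : ℝ) ≤ ∑ x, traceNorm (D x) :=
    Finset.sum_nonneg fun x _ => traceNorm_nonneg _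
  linarith

/-- the fundamental pairing estimate. -/
lemma trace_pairing_le [Nonempty ι] {Δ G : QMat ι}
    (D : ι → QMat ι)
    (hD : ∀ x, (D x).IsHermitian ∧ (D x).trace = 0 ∧ ptrace ({x}ᶜ : Finset ι) (D x) = 0)
    (hΔ : Δ = ∑ x, D x)
    (F : Finset ι → QMat ι) (hF : ∀ Λ, ActsOn Λ (F Λ)) (hG : G = ∑ Λ, F Λ) :
    ((Δ * G).trace).re ≤
      (2 * ⨆ x : ι, ∑ Λ ∈ Finset.univ.filter (fun Λ : Finset ι => x ∈ Λ),
        c Λ.card * opNorm (F Λ)) * ((1 / 2) * ∑ x, traceNorm (D x)) := by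
  set S : ι → ℝ := fun x => ∑ Λ ∈ Finset.univ.filter (fun Λ : Finset ι => x ∈ Λ),
    c Λ.card * opNorm (F Λ) with hS
  have hSup : ∀ x, S x ≤ ⨆ y, S y := fun x => le_ciSup (Set.finite_range S).bddAbove x
  have h1 : (Δ * G).trace = ∑ x, (D x * G).trace := by
    rw [hΔ, Finset.sum_mul, Matrix.trace_sum]
  have h2 : ∀ x : ι, (D x * G).trace
      = ∑ Λ ∈ Finset.univ.filter (fun Λ : Finset ι => x ∈ Λ), (D x * F Λ).trace := by
    intro x
    rw [hG, Finset.mul_sum, Matrix.trace_sum]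
    refine (Finset.sum_filter_of_ne fun Λ _ hne => ?_).symm
    by_contra hx
    apply hne
    obtain ⟨M, _, hFΛ⟩ := hF Λ
    rw [hFΛ, trace_mul_embed, ptrace_eq_zero_of_notMem hx (hD x).2.2, Matrix.zero_mul,
      Matrix.trace_zero]
  have h3 : ∀ x : ι, ((D x * G).trace).re ≤ traceNorm (D x) * S x := by
    intro x
    rw [h2 x]
    calc ((∑ Λ ∈ Finset.univ.filter (fun Λ : Finset ι => x ∈ Λ), (D x * F Λ).trace)).re
        = ∑ Λ ∈ Finset.univ.filter (fun Λ : Finset ι => x ∈ Λ), ((D x * F Λ).trace).re := by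
          rw [Complex.re_sum]
      _ ≤ ∑ Λ ∈ Finset.univ.filter (fun Λ : Finset ι => x ∈ Λ),
            traceNorm (D x) * (c Λ.card * opNorm (F Λ)) := by
          refine Finset.sum_le_sum fun Λ hΛ => ?_
          have hx : x ∈ Λ := (Finset.mem_filter.mp hΛ).2
          have hc1 : (1 : ℝ) ≤ c Λ.card := hcard Λ ⟨x, hx⟩
          calc ((D x * F Λ).trace).re ≤ ‖(D x * F Λ).trace‖ := Complex.re_le_norm _
            _ ≤ traceNorm (D x) * opNorm (F Λ) := holder _ _
            _ ≤ traceNorm (D x) * (c Λ.card * opNorm (F Λ)) := by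
                refine mul_le_mul_of_nonneg_left ?_ (traceNorm_nonneg _)
                exact le_mul_of_one_le_left (opNorm_nonneg _) hc1
      _ = traceNorm (D x) * S x := by
          rw [hS, Finset.mul_sum]
  have h4 : ((Δ * G).trace).re ≤ ∑ x, traceNorm (D x) * (⨆ y, S y) := by
    rw [h1, Complex.re_sum]
    refine Finset.sum_le_sum fun x _ => ?_
    calc ((D x * G).trace).re ≤ traceNorm (D x) * S x := h3 x
      _ ≤ traceNorm (D x) * (⨆ y, S y) :=
          mul_le_mul_of_nonneg_left (hSup x) (traceNorm_nonneg _)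
  calc ((Δ * G).trace).re ≤ ∑ x, traceNorm (D x) * (⨆ y, S y) := h4
    _ = (2 * ⨆ y, S y) * ((1 / 2) * ∑ x, traceNorm (D x)) := by
        rw [← Finset.sum_mul]
        ring

omit hcard in
lemma opNorm_neg' (A : Matrix (ι → Fin 2) (ι → Fin 2) ℂ) : opNorm (-A) = opNorm A := by
  unfold opNorm
  congr 1
  funext i
  congr 1
  have h : (-A)ᴴ * (-A) = Aᴴ * A := by
    rw [Matrix.conjTranspose_neg, neg_mul, mul_neg, neg_neg]
  exact congrFun (eig_congr h _ _) i

omit hcard in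
lemma embed_smul (Λ : Finset ι) (t : ℂ)
    (M : Matrix ({x // x ∈ Λ} → Fin 2) ({x // x ∈ Λ} → Fin 2) ℂ) :
    embed Λ (t • M) = t • embed Λ M := by
  funext f g
  unfold embed
  show _ = t • (if (∀ x : ι, x ∉ Λ → f x = g x) then (_ : ℂ) else _)
  by_cases h : ∀ x : ι, x ∉ Λ → f x = g x
  · rw [if_pos h, if_pos h]
    rfl
  · rw [if_neg h, if_neg h]
    exact (smul_zero t).symm

omit hcard in
lemma embed_sub (Λ : Finset ι)
    (M N : Matrix ({x // x ∈ Λ} → Fin 2) ({x // x ∈ Λ} → Fin 2) ℂ) :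
    embed Λ (M - N) = embed Λ M - embed Λ N := by
  funext f g
  unfold embed
  show _ = (if (∀ x : ι, x ∉ Λ → f x = g x) then (_ : ℂ) else _) - (if (∀ x : ι, x ∉ Λ → f x = g x) then (_ : ℂ) else _)
  by_cases h : ∀ x : ι, x ∉ Λ → f x = g x
  · rw [if_pos h, if_pos h, if_pos h]
    rfl
  · rw [if_neg h, if_neg h, if_neg h]
    exact (sub_zero (0 : ℂ)).symm

omit hcard in
lemma isHermitian_real_smul {A : QMat ι} (hA : A.IsHermitian) (t : ℝ) :
    (((t : ℝ) : ℂ) • A).IsHermitian := by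
  rw [Matrix.IsHermitian, Matrix.conjTranspose_smul, RCLike.star_def, Complex.conj_ofReal, hA]

omit hcard in
lemma actsOn_smul_sub {Λ : Finset ι} {A B : QMat ι} (t : ℝ)
    (hA : ActsOn Λ A) (hB : ActsOn Λ B) : ActsOn Λ (((t : ℝ) : ℂ) • (A - B)) := by
  obtain ⟨M, hM, rfl⟩ := hA
  obtain ⟨N, hN, rfl⟩ := hB
  refine ⟨((t : ℝ) : ℂ) • (M - N), ?_, ?_⟩
  · rw [Matrix.IsHermitian, Matrix.conjTranspose_smul, RCLike.star_def, Complex.conj_ofReal,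
      Matrix.conjTranspose_sub, hM, hN]
  · rw [embed_smul, embed_sub]

omit hcard in
lemma W1SetOf_neg (Δ : QMat ι) : W1SetOf (-Δ) = W1SetOf Δ := by
  have key : ∀ Δ' : QMat ι, W1SetOf Δ' ⊆ W1SetOf (-Δ') := by
    rintro Δ' r ⟨D, hD, hsum, rfl⟩
    refine ⟨fun x => -(D x), fun x => ⟨(hD x).1.neg, ?_, ?_⟩, ?_, ?_⟩
    · rw [Matrix.trace_neg, (hD x).2.1, neg_zero]
    · have hneg : ptrace ({x}ᶜ : Finset ι) (-(D x)) = -(ptrace ({x}ᶜ : Finset ι) (D x)) := by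
        funext f g
        show (∑ h, (-(D x)) _ _) = -(∑ h, D x _ _)
        rw [← Finset.sum_neg_distrib]
        rfl
      rw [hneg, (hD x).2.2, neg_zero]
    · rw [hsum, ← Finset.sum_neg_distrib]
    · refine congrArg _ (Finset.sum_congr rfl fun x _ => (traceNorm_neg (D x)).symm)
  apply Set.Subset.antisymm
  · intro r h
    have := key (-Δ) h
    rwa [neg_neg] at this
  · exact key Δ

omit hcard in
lemma W1_neg (Δ : QMat ι) : W1 (-Δ) = W1 Δ := by
  rw [W1_eq, W1_eq, W1SetOf_neg]

end LocNorm




end QW1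

/-- Equivalence of the quantum `W₁` distance and the local quantum `W₁`
distance on Gibbs states of Hamiltonians with local quantum norm at most `M` satisfying a
transportation-cost inequality with constant `C`. -/
theorem stmt17 {n : ℕ} (c : ℕ → ℝ) (hc1 : c 1 = 1)
    (hcmono : ∀ k l, 1 ≤ k → k ≤ l → l ≤ n → c k ≤ c l)
    (Mb C : ℝ) (hC : 0 < C)
    (H K : QMat (Fin n)) (hH : H.IsHermitian) (hK : K.IsHermitian)
    (hHM : localNorm c H ≤ Mb) (hKM : localNorm c K ≤ Mb)
    (hTCH : ∀ ρ : QMat (Fin n), IsState ρ →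
      W1 (ρ - gibbs H) ^ 2 ≤ n * C / 2 * relEnt ρ (gibbs H))
    (hTCK : ∀ ρ : QMat (Fin n), IsState ρ →
      W1 (ρ - gibbs K) ^ 2 ≤ n * C / 2 * relEnt ρ (gibbs K)) :
    W1loc c (gibbs H - gibbs K) ^ 2 / (n : ℝ) ^ 2 ≤
        W1 (gibbs H - gibbs K) ^ 2 / (n : ℝ) ^ 2 ∧
    W1 (gibbs H - gibbs K) ^ 2 / (n : ℝ) ^ 2 ≤
        Mb * C / 2 * (W1loc c (gibbs H - gibbs K) / n) := by
  rcases Nat.eq_zero_or_pos n with hn0 | hnpos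
  · subst hn0
    norm_num
  have hιne : Nonempty (Fin n) := ⟨⟨0, hnpos⟩⟩
  have hSH := gibbs_isState hH
  have hSK := gibbs_isState hK
  set Δ : QMat (Fin n) := gibbs H - gibbs K with hΔdef
  have hΔherm : Δ.IsHermitian := hSH.1.1.sub hSK.1.1
  have hΔtr : Δ.trace = 0 := by
    rw [hΔdef, Matrix.trace_sub, hSH.2, hSK.2, sub_self]
  have hcard : ∀ Λ : Finset (Fin n), Λ.Nonempty → 1 ≤ c Λ.card := by
    intro Λ hΛ
    have h1 : 1 ≤ Λ.card := Finset.card_pos.mpr hΛ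
    have h2 : Λ.card ≤ n := le_trans (Finset.card_le_univ Λ) (by simp)
    calc (1 : ℝ) = c 1 := hc1.symm
      _ ≤ c Λ.card := hcmono 1 Λ.card le_rfl h1 h2
  have hr₀ : ((1 : ℝ) / 2) * ∑ x, traceNorm (DD Δ x) ∈ W1SetOf Δ :=
    ⟨DD Δ, fun x => ⟨DD_isHermitian hΔherm x, DD_trace Δ x, DD_ptrace Δ x⟩,
      (DD_sum Δ hΔtr).symm, rfl⟩
  have hW1ne : (W1SetOf Δ).Nonempty := ⟨_, hr₀⟩
  have key : ∀ w ∈ W1locSetOf c Δ, ∀ r ∈ W1SetOf Δ, w ≤ r := by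
    rintro w ⟨G, hGh, hGloc, rfl⟩ r hrmem
    obtain ⟨D, hD, hDsum, hrval⟩ := hrmem
    have hrnn : 0 ≤ r := W1SetOf_nonneg r ⟨D, hD, hDsum, hrval⟩
    refine le_of_forall_pos_le_add ?_
    intro ε' hε'
    set ε : ℝ := ε' / (r + 1) with hεdef
    have hεpos : 0 < ε := div_pos hε' (by linarith)
    obtain ⟨F, hF1, hF2, hFval⟩ := exists_good_decomp hcard hGh hεpos hGloc
    have hub := trace_pairing_le hcard D hD hDsum F hF1 hF2
    rw [← hrval] at hub
    have hchain : ((Δ * G).trace).re ≤ (1 + ε) * r := by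
      calc ((Δ * G).trace).re
          ≤ (2 * ⨆ x : Fin n, ∑ Λ ∈ Finset.univ.filter (fun Λ : Finset (Fin n) => x ∈ Λ),
              c Λ.card * opNorm (F Λ)) * r := hub
        _ ≤ (1 + ε) * r := mul_le_mul_of_nonneg_right (le_of_lt hFval) hrnn
    have hεr : ε * r ≤ ε' := by
      rw [hεdef]
      rw [div_mul_eq_mul_div, div_le_iff₀ (by linarith : (0:ℝ) < r + 1)]
      nlinarith
    nlinarith [hchain]
  have h0mem : (0 : ℝ) ∈ W1locSetOf c Δ := by
    refine ⟨0, Matrix.isHermitian_zero, localNorm_zero_le_one hcard, ?_⟩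
    rw [Matrix.mul_zero, Matrix.trace_zero]
    rfl
  have hlocne : (W1locSetOf c Δ).Nonempty := ⟨0, h0mem⟩
  have hlocbdd : BddAbove (W1locSetOf c Δ) := ⟨_, fun w hw => key w hw _ hr₀⟩
  have hW1loc_le_W1 : W1loc c Δ ≤ W1 Δ := by
    rw [W1loc_eq, W1_eq]
    exact le_csInf hW1ne fun r hr => csSup_le hlocne fun w hw => key w hw r hr
  have hW1loc_nonneg : 0 ≤ W1loc c Δ := by
    rw [W1loc_eq]
    exact le_csSup hlocbdd h0mem
  have hnpos' : (0 : ℝ) < (n : ℝ) := by exact_mod_cast hnpos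
  have hn2pos : (0 : ℝ) < (n : ℝ) ^ 2 := pow_pos hnpos' 2
  constructor
  · have hsq : W1loc c Δ ^ 2 ≤ W1 Δ ^ 2 :=
      pow_le_pow_left₀ hW1loc_nonneg hW1loc_le_W1 2
    exact (div_le_div_iff_of_pos_right hn2pos).mpr hsq
  · -- the pairing bound
    have hMbnn : 0 ≤ Mb := le_trans (localNorm_nonneg hcard H) hHM
    have hpairε : ∀ ε : ℝ, 0 < ε →
        ((Δ * (K - H)).trace).re ≤ (2 * Mb + 2 * ε) * W1loc c Δ := by
      intro ε hε
      obtain ⟨F₁, hF₁a, hF₁s, hF₁v⟩ := exists_good_decomp hcard hK hε hKM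
      obtain ⟨F₂, hF₂a, hF₂s, hF₂v⟩ := exists_good_decomp hcard hH hε hHM
      set t : ℝ := (2 * Mb + 2 * ε)⁻¹ with ht
      have htpos : 0 < t := inv_pos.mpr (by linarith)
      set G : QMat (Fin n) := ((t : ℝ) : ℂ) • (K - H) with hGdef
      have hGh : G.IsHermitian := isHermitian_real_smul (hK.sub hH) t
      have hFGa : ∀ Λ, ActsOn Λ (((t : ℝ) : ℂ) • (F₁ Λ - F₂ Λ)) :=
        fun Λ => actsOn_smul_sub t (hF₁a Λ) (hF₂a Λ)
      have hGsum : G = ∑ Λ, ((t : ℝ) : ℂ) • (F₁ Λ - F₂ Λ) := by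
        rw [hGdef, ← Finset.smul_sum, Finset.sum_sub_distrib, ← hF₁s, ← hF₂s]
      -- value estimate
      have hS1 : ∀ x : Fin n, ∑ Λ ∈ Finset.univ.filter (fun Λ : Finset (Fin n) => x ∈ Λ),
            c Λ.card * opNorm (((t : ℝ) : ℂ) • (F₁ Λ - F₂ Λ))
          ≤ t * (∑ Λ ∈ Finset.univ.filter (fun Λ : Finset (Fin n) => x ∈ Λ),
              c Λ.card * opNorm (F₁ Λ))
            + t * (∑ Λ ∈ Finset.univ.filter (fun Λ : Finset (Fin n) => x ∈ Λ),
              c Λ.card * opNorm (F₂ Λ)) := by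
        intro x
        rw [Finset.mul_sum, Finset.mul_sum, ← Finset.sum_add_distrib]
        refine Finset.sum_le_sum fun Λ hΛ => ?_
        have hx : x ∈ Λ := (Finset.mem_filter.mp hΛ).2
        have hc0 : (0 : ℝ) ≤ c Λ.card := le_trans zero_le_one (hcard Λ ⟨x, hx⟩)
        have hop : opNorm (((t : ℝ) : ℂ) • (F₁ Λ - F₂ Λ))
            ≤ t * (opNorm (F₁ Λ) + opNorm (F₂ Λ)) := by
          calc opNorm (((t : ℝ) : ℂ) • (F₁ Λ - F₂ Λ))
              ≤ ‖((t : ℝ) : ℂ)‖ * opNorm (F₁ Λ - F₂ Λ) := opNorm_smul_le _ _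
            _ = t * opNorm (F₁ Λ - F₂ Λ) := by
                rw [Complex.norm_real, Real.norm_eq_abs, abs_of_pos htpos]
            _ ≤ t * (opNorm (F₁ Λ) + opNorm (F₂ Λ)) := by
                refine mul_le_mul_of_nonneg_left ?_ htpos.le
                calc opNorm (F₁ Λ - F₂ Λ) = opNorm (F₁ Λ + -(F₂ Λ)) := by rw [sub_eq_add_neg]
                  _ ≤ opNorm (F₁ Λ) + opNorm (-(F₂ Λ)) := opNorm_add_le _ _
                  _ = opNorm (F₁ Λ) + opNorm (F₂ Λ) := by rw [opNorm_neg']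
        calc c Λ.card * opNorm (((t : ℝ) : ℂ) • (F₁ Λ - F₂ Λ))
            ≤ c Λ.card * (t * (opNorm (F₁ Λ) + opNorm (F₂ Λ))) :=
              mul_le_mul_of_nonneg_left hop hc0
          _ = t * (c Λ.card * opNorm (F₁ Λ)) + t * (c Λ.card * opNorm (F₂ Λ)) := by ring
      have hS2 : (⨆ x : Fin n, ∑ Λ ∈ Finset.univ.filter (fun Λ : Finset (Fin n) => x ∈ Λ),
            c Λ.card * opNorm (((t : ℝ) : ℂ) • (F₁ Λ - F₂ Λ)))
          ≤ t * (⨆ x : Fin n, ∑ Λ ∈ Finset.univ.filter (fun Λ : Finset (Fin n) => x ∈ Λ),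
              c Λ.card * opNorm (F₁ Λ))
            + t * (⨆ x : Fin n, ∑ Λ ∈ Finset.univ.filter (fun Λ : Finset (Fin n) => x ∈ Λ),
              c Λ.card * opNorm (F₂ Λ)) := by
        refine ciSup_le fun x => ?_
        refine le_trans (hS1 x) ?_
        have hb1 := le_ciSup (Set.finite_range
          (fun x : Fin n => ∑ Λ ∈ Finset.univ.filter (fun Λ : Finset (Fin n) => x ∈ Λ),
            c Λ.card * opNorm (F₁ Λ))).bddAbove x
        have hb2 := le_ciSup (Set.finite_range
          (fun x : Fin n => ∑ Λ ∈ Finset.univ.filter (fun Λ : Finset (Fin n) => x ∈ Λ),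
            c Λ.card * opNorm (F₂ Λ))).bddAbove x
        have := mul_le_mul_of_nonneg_left hb1 htpos.le
        have := mul_le_mul_of_nonneg_left hb2 htpos.le
        linarith
      have hval : 2 * (⨆ x : Fin n, ∑ Λ ∈ Finset.univ.filter
            (fun Λ : Finset (Fin n) => x ∈ Λ),
            c Λ.card * opNorm (((t : ℝ) : ℂ) • (F₁ Λ - F₂ Λ))) ≤ 1 := by
        have h2S := hS2
        have hfin : t * (2 * Mb + 2 * ε) = 1 := inv_mul_cancel₀ (by linarith)
        have k1 := mul_le_mul_of_nonneg_left hF₁v.le htpos.le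
        have k2 := mul_le_mul_of_nonneg_left hF₂v.le htpos.le
        nlinarith [h2S, k1, k2, hfin]
      have hGloc : localNorm c G ≤ 1 := by
        rw [localNorm_eq]
        exact le_trans (csInf_le (locSet_bddBelow hcard) ⟨_, hFGa, hGsum, rfl⟩) hval
      have hwmem : ((Δ * G).trace).re ∈ W1locSetOf c Δ := ⟨G, hGh, hGloc, rfl⟩
      have hwle : ((Δ * G).trace).re ≤ W1loc c Δ := by
        rw [W1loc_eq]
        exact le_csSup hlocbdd hwmem
      have hre : ((Δ * G).trace).re = t * ((Δ * (K - H)).trace).re := by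
        rw [hGdef, show Δ * (((t : ℝ) : ℂ) • (K - H)) = ((t : ℝ) : ℂ) • (Δ * (K - H)) from
          Matrix.mul_smul _ _ _, Matrix.trace_smul, smul_eq_mul]
        simp [Complex.mul_re]
      rw [hre] at hwle
      calc ((Δ * (K - H)).trace).re = t⁻¹ * (t * ((Δ * (K - H)).trace).re) := by
            field_simp
        _ ≤ t⁻¹ * W1loc c Δ := mul_le_mul_of_nonneg_left hwle (inv_nonneg.mpr htpos.le)
        _ = (2 * Mb + 2 * ε) * W1loc c Δ := by rw [ht, inv_inv]
    have hpair : ((Δ * (K - H)).trace).re ≤ 2 * Mb * W1loc c Δ := by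
      refine le_of_forall_pos_le_add ?_
      intro δ hδ
      have hε : (0 : ℝ) < δ / (2 * W1loc c Δ + 2) := div_pos hδ (by linarith)
      have := hpairε _ hε
      have hX : (0 : ℝ) < 2 * W1loc c Δ + 2 := by linarith
      have h2 : 2 * (δ / (2 * W1loc c Δ + 2)) * W1loc c Δ ≤ δ := by
        have h0 : 2 * (δ / (2 * W1loc c Δ + 2)) * W1loc c Δ
            = δ * (2 * W1loc c Δ) / (2 * W1loc c Δ + 2) := by ring
        rw [h0, div_le_iff₀ hX]
        nlinarith
      nlinarith
    -- transportation cost inequalities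
    have hT1 : W1 Δ ^ 2 ≤ (n : ℝ) * C / 2 * relEnt (gibbs H) (gibbs K) := hTCK (gibbs H) hSH
    have hT2 : W1 Δ ^ 2 ≤ (n : ℝ) * C / 2 * relEnt (gibbs K) (gibbs H) := by
      have := hTCH (gibbs K) hSK
      have hneg : gibbs K - gibbs H = -Δ := (neg_sub _ _).symm
      rwa [hneg, W1_neg Δ] at this
    have hrel := relEnt_add_relEnt hH hK
    have hnC : (0 : ℝ) ≤ (n : ℝ) * C / 2 := by positivity
    have hsum2 : 2 * W1 Δ ^ 2 ≤ (n : ℝ) * C / 2 *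
        (relEnt (gibbs H) (gibbs K) + relEnt (gibbs K) (gibbs H)) := by
      nlinarith [hT1, hT2]
    rw [hrel] at hsum2
    have h3 := mul_le_mul_of_nonneg_left hpair hnC
    have hmain : W1 Δ ^ 2 ≤ (n : ℝ) * C * Mb / 2 * W1loc c Δ := by
      nlinarith [hsum2, h3]
    have heq : Mb * C / 2 * (W1loc c Δ / (n : ℝ))
        = ((n : ℝ) * C * Mb / 2 * W1loc c Δ) / (n : ℝ) ^ 2 := by
      field_simp
    rw [heq]
    exact (div_le_div_iff_of_pos_right hn2pos).mpr hmain
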